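/- arXiv:1605.02114 — 3 statements merged into one kernel-verified Lean document; each statement's English description precedes it below -/
import Mathlib

section
/- Let 0 < α < γ < 1, let W(x,y) = (1−α)²(xy)^{−α} on (0,1]², and let ρ_n = n^{−γ}. For i ∈ [n], the expected degree of node i in the sparse W-random graph G(W, ρ_n, X_n) equals d_{ni} = ρ_n Σ_{j=1}^n min(ρ_n^{−1}, W(i/n, j/n)). Then for every fixed i ≥ 1, d_{ni} = (1−α) n^{1+α−γ} i^{−α} (1 + o(1)) as n → ∞; that is, lim_{n→∞} d_{ni} · i^{α} n^{−(1+α−γ)} = 1 − α. -/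
open Filter Real

section helpers

lemma min_lb_aux (a b e : ℝ) (ha : 0 < a) (hb : 0 < b) (he : 0 < e) :
    a - a ^ (1 + e) * b ^ (-e) ≤ min b a := by
  rcases le_total a b with h | h
  · have hpos : 0 < a ^ (1 + e) * b ^ (-e) := by positivity
    rw [min_eq_right h]; linarith
  · rw [min_eq_left h]
    have hbe : b ^ e ≤ a ^ e := Real.rpow_le_rpow hb.le h he.le
    have h2 : a ^ (1 + e) * b ^ (-e) = a * (a ^ e / b ^ e) := by
      rw [Real.rpow_add ha, Real.rpow_one, Real.rpow_neg hb.le]; ring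
    have h3 : a ≤ a ^ (1 + e) * b ^ (-e) := by
      rw [h2]
      nth_rewrite 1 [← mul_one a]
      refine mul_le_mul_of_nonneg_left ?_ ha.le
      rw [le_div_iff₀ (by positivity)]; linarith
    linarith

lemma expand_aux (α I J N : ℝ) (hI : 0 < I) (hJ : 0 < J) (hN : 0 < N) :
    ((I / N) * (J / N)) ^ (-α) = I ^ (-α) * N ^ α * (J ^ (-α) * N ^ α) := by
  rw [Real.mul_rpow (by positivity) (by positivity),
    Real.div_rpow hI.le hN.le, Real.div_rpow hJ.le hN.le,
    Real.rpow_neg hN.le α]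
  field_simp

lemma kmul_aux (α γ I J N c : ℝ) (hI : 0 < I) (hJ : 0 < J) (hN : 0 < N) :
    (N ^ (-γ) * I ^ α * N ^ (-(1 + α - γ))) * (c * (I ^ (-α) * N ^ α * (J ^ (-α) * N ^ α)))
      = (c * N ^ (α - 1)) * J ^ (-α) := by
  have eI : I ^ α * I ^ (-α) = 1 := by
    rw [← Real.rpow_add hI]; simp
  have eN : N ^ (-γ) * N ^ (-(1 + α - γ)) * (N ^ α * N ^ α) = N ^ (α - 1) := by
    rw [← Real.rpow_add hN, ← Real.rpow_add hN, ← Real.rpow_add hN]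
    congr 1; ring
  calc (N ^ (-γ) * I ^ α * N ^ (-(1 + α - γ))) * (c * (I ^ (-α) * N ^ α * (J ^ (-α) * N ^ α)))
      = c * J ^ (-α) * (I ^ α * I ^ (-α)) *
        (N ^ (-γ) * N ^ (-(1 + α - γ)) * (N ^ α * N ^ α)) := by ring
    _ = (c * N ^ (α - 1)) * J ^ (-α) := by rw [eI, eN]; ring

lemma kmul2_aux (α γ ε I J N c : ℝ) (hI : 0 < I) (hJ : 0 < J) (hN : 0 < N) (hc : 0 < c) :
    (N ^ (-γ) * I ^ α * N ^ (-(1 + α - γ))) *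
        ((c * (I ^ (-α) * N ^ α * (J ^ (-α) * N ^ α))) ^ (1 + ε) * (N ^ γ) ^ (-ε))
      = (c ^ (1 + ε) * I ^ (-(α * ε)) * N ^ (ε * (α - γ) + (α * (1 + ε) - 1))) *
          J ^ (-(α * (1 + ε))) := by
  have e3 : (c * (I ^ (-α) * N ^ α * (J ^ (-α) * N ^ α))) ^ (1 + ε)
      = c ^ (1 + ε) * (I ^ (-α * (1 + ε)) * N ^ (α * (1 + ε)) *
          (J ^ (-α * (1 + ε)) * N ^ (α * (1 + ε)))) := by
    rw [Real.mul_rpow hc.le (by positivity),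
      Real.mul_rpow (by positivity) (by positivity),
      Real.mul_rpow (by positivity) (by positivity),
      Real.mul_rpow (by positivity) (by positivity),
      ← Real.rpow_mul hI.le, ← Real.rpow_mul hJ.le, ← Real.rpow_mul hN.le]
  have e4 : (N ^ γ) ^ (-ε) = N ^ (γ * (-ε)) := (Real.rpow_mul hN.le γ (-ε)).symm
  have eI : I ^ α * I ^ (-α * (1 + ε)) = I ^ (-(α * ε)) := by
    rw [← Real.rpow_add hI]; congr 1; ring
  have eN : N ^ (-γ) * N ^ (-(1 + α - γ)) * (N ^ (α * (1 + ε)) * N ^ (α * (1 + ε)))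
        * N ^ (γ * (-ε)) = N ^ (ε * (α - γ) + (α * (1 + ε) - 1)) := by
    rw [← Real.rpow_add hN, ← Real.rpow_add hN, ← Real.rpow_add hN, ← Real.rpow_add hN]
    congr 1; ring
  have eJ : J ^ (-α * (1 + ε)) = J ^ (-(α * (1 + ε))) := by congr 1; ring
  rw [e3, e4]
  calc (N ^ (-γ) * I ^ α * N ^ (-(1 + α - γ))) *
        (c ^ (1 + ε) * (I ^ (-α * (1 + ε)) * N ^ (α * (1 + ε)) *
          (J ^ (-α * (1 + ε)) * N ^ (α * (1 + ε)))) * N ^ (γ * (-ε)))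
      = c ^ (1 + ε) * J ^ (-α * (1 + ε)) * (I ^ α * I ^ (-α * (1 + ε))) *
        (N ^ (-γ) * N ^ (-(1 + α - γ)) * (N ^ (α * (1 + ε)) * N ^ (α * (1 + ε)))
          * N ^ (γ * (-ε))) := by ring
    _ = (c ^ (1 + ε) * I ^ (-(α * ε)) * N ^ (ε * (α - γ) + (α * (1 + ε) - 1))) *
          J ^ (-(α * (1 + ε))) := by rw [eI, eN, eJ]; ring

lemma antitone_rpow_neg' (β : ℝ) (hβ : 0 < β) :
    AntitoneOn (fun x : ℝ => x ^ (-β)) (Set.Ici 1) := by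
  intro x hx y hy hxy
  exact Real.rpow_le_rpow_of_nonpos (lt_of_lt_of_le one_pos hx) hxy (by linarith)

lemma sum_rpow_asymp (β : ℝ) (h0 : 0 < β) (h1 : β < 1) :
    Tendsto (fun n : ℕ => (n : ℝ) ^ (β - 1) * ∑ j ∈ Finset.Icc 1 n, (j : ℝ) ^ (-β))
      atTop (nhds (1 / (1 - β))) := by
  have h1β : (0:ℝ) < 1 - β := by linarith
  have hint : ∀ n : ℕ, (∫ x in (1:ℝ)..(1 + n), x ^ (-β)) =
      ((1 + (n:ℝ)) ^ (1 - β) - 1) / (1 - β) := by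
    intro n
    rw [integral_rpow (Or.inl (by linarith))]
    rw [Real.one_rpow]
    ring_nf
  have hanti : ∀ n : ℕ, AntitoneOn (fun x : ℝ => x ^ (-β)) (Set.Icc 1 (1 + n)) :=
    fun n => (antitone_rpow_neg' β h0).mono (Set.Icc_subset_Ici_self)
  have hsum : ∀ n : ℕ, (∑ j ∈ Finset.Icc 1 n, (j : ℝ) ^ (-β)) =
      ∑ k ∈ Finset.range n, ((1:ℝ) + k) ^ (-β) := by
    intro n
    rw [← Finset.Ico_add_one_right_eq_Icc, Finset.sum_Ico_eq_sum_range]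
    simp only [Nat.add_sub_cancel]
    refine Finset.sum_congr rfl fun k _ => ?_
    push_cast; ring_nf
  have hub : ∀ n : ℕ, (∑ j ∈ Finset.Icc 1 n, (j : ℝ) ^ (-β)) ≤
      1 + ((1 + (n:ℝ)) ^ (1 - β) - 1) / (1 - β) := by
    intro n
    rw [hsum n, ← hint n]
    have h := (hanti n).sum_le_integral (f := fun x : ℝ => x ^ (-β))
    have hstep : (∑ k ∈ Finset.range n, ((1:ℝ) + k) ^ (-β)) ≤
        1 + ∑ k ∈ Finset.range n, ((1:ℝ) + (k + 1 : ℕ)) ^ (-β) := by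
      cases n with
      | zero => simp
      | succ m =>
        rw [Finset.sum_range_succ' (fun k => ((1:ℝ) + k) ^ (-β)) m]
        push_cast
        have hsub : (∑ k ∈ Finset.range m, ((1:ℝ) + ((k:ℝ) + 1)) ^ (-β)) ≤
            ∑ k ∈ Finset.range (m+1), ((1:ℝ) + ((k:ℝ) + 1)) ^ (-β) :=
          Finset.sum_le_sum_of_subset_of_nonneg (Finset.range_subset_range.2 (Nat.le_succ m))
            (fun k _ _ => by positivity)
        simp only [add_zero, Real.one_rpow]
        rw [add_comm]
        exact add_le_add_right hsub 1
    linarith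
  have hlb : ∀ n : ℕ, ((1 + (n:ℝ)) ^ (1 - β) - 1) / (1 - β) ≤
      ∑ j ∈ Finset.Icc 1 n, (j : ℝ) ^ (-β) := by
    intro n
    rw [hsum n, ← hint n]
    exact (hanti n).integral_le_sum (f := fun x : ℝ => x ^ (-β))
  have hn0 : Tendsto (fun n : ℕ => (n:ℝ) ^ (β - 1)) atTop (nhds 0) := by
    have h3 := (tendsto_rpow_neg_atTop (y := 1 - β) h1β).comp
      (tendsto_natCast_atTop_atTop (R := ℝ))
    refine h3.congr fun n => ?_
    show ((n:ℝ)) ^ (-(1 - β)) = (n:ℝ) ^ (β - 1)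
    ring_nf
  have hA : Tendsto (fun n : ℕ => (n:ℝ) ^ (β - 1) * (1 + (n:ℝ)) ^ (1 - β)) atTop (nhds 1) := by
    have hq : Tendsto (fun n : ℕ => (1 + (n:ℝ)) / n) atTop (nhds 1) := by
      have h5 : Tendsto (fun n : ℕ => 1 / (n:ℝ) + 1) atTop (nhds (0 + 1)) :=
        (tendsto_one_div_atTop_nhds_zero_nat).add tendsto_const_nhds
      rw [zero_add] at h5
      refine Tendsto.congr' ?_ h5
      filter_upwards [eventually_gt_atTop 0] with n hn
      have hne : (n:ℝ) ≠ 0 := Nat.cast_ne_zero.2 hn.ne'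
      field_simp
    have hc : ContinuousAt (fun x : ℝ => x ^ (1 - β)) 1 :=
      (Real.continuousAt_rpow_const 1 (1-β) (Or.inl one_ne_zero))
    have h4 := hc.tendsto.comp hq
    rw [Real.one_rpow] at h4
    refine h4.congr' ?_
    filter_upwards [eventually_gt_atTop 0] with n hn
    have hnpos : (0:ℝ) < n := Nat.cast_pos.2 hn
    show ((1 + (n:ℝ)) / n) ^ (1 - β) = (n:ℝ) ^ (β - 1) * (1 + (n:ℝ)) ^ (1 - β)
    rw [Real.div_rpow (by positivity) hnpos.le,
      show β - 1 = -(1-β) by ring, Real.rpow_neg hnpos.le]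
    field_simp
  have hlim : Tendsto (fun n : ℕ => (n:ℝ) ^ (β-1) * (((1 + (n:ℝ)) ^ (1 - β) - 1) / (1 - β)))
      atTop (nhds (1 / (1 - β))) := by
    have h6 : Tendsto
        (fun n : ℕ => ((n:ℝ) ^ (β-1) * (1 + (n:ℝ)) ^ (1 - β) - (n:ℝ)^(β-1)) / (1 - β))
        atTop (nhds ((1 - 0) / (1 - β))) := (hA.sub hn0).div_const _
    rw [sub_zero] at h6
    refine h6.congr fun n => ?_
    ring
  have hlim2 : Tendsto (fun n : ℕ => (n:ℝ) ^ (β-1) * (1 + ((1 + (n:ℝ)) ^ (1 - β) - 1) / (1 - β)))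
      atTop (nhds (1 / (1 - β))) := by
    have h7 := hn0.add hlim
    rw [zero_add] at h7
    refine h7.congr fun n => ?_
    ring
  refine tendsto_of_tendsto_of_tendsto_of_le_of_le hlim hlim2 (fun n => ?_) (fun n => ?_)
  · exact mul_le_mul_of_nonneg_left (hlb n) (Real.rpow_nonneg (Nat.cast_nonneg n) _)
  · exact mul_le_mul_of_nonneg_left (hub n) (Real.rpow_nonneg (Nat.cast_nonneg n) _)

end helpers

/-- For the sparse power-law graphon `W(x,y) = (1-α)²(xy)^{-α}` with
`ρ_n = n^{-γ}`, the expected degree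
`d_{ni} = ρ_n ∑_{j=1}^n min(ρ_n⁻¹, W(i/n, j/n))` of a fixed node `i ≥ 1` satisfies
`d_{ni} · i^α · n^{-(1+α-γ)} → 1 - α` as `n → ∞`. -/
theorem expected_degree_power_law (α γ : ℝ) (hα : 0 < α) (hαγ : α < γ) (hγ : γ < 1)
    (i : ℕ) (hi : 1 ≤ i) :
    Tendsto (fun n : ℕ =>
        ((n : ℝ) ^ (-γ) *
            ∑ j ∈ Finset.Icc 1 n,
              min ((n : ℝ) ^ γ)
                ((1 - α) ^ 2 * (((i : ℝ) / (n : ℝ)) * ((j : ℝ) / (n : ℝ))) ^ (-α))) *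
          (i : ℝ) ^ α * (n : ℝ) ^ (-(1 + α - γ)))
      atTop (nhds (1 - α)) := by
  have hα1 : α < 1 := hαγ.trans hγ
  have h1α : (0:ℝ) < 1 - α := by linarith
  have hc : (0:ℝ) < (1 - α) ^ 2 := by positivity
  set ε : ℝ := (1 - α) / (2 * α) with hε_def
  have hε : 0 < ε := div_pos h1α (by linarith)
  have hβ'eq : α * (1 + ε) = (1 + α) / 2 := by
    rw [hε_def]; field_simp; ring
  have hβ'0 : 0 < α * (1 + ε) := by rw [hβ'eq]; linarith
  have hβ'1 : α * (1 + ε) < 1 := by rw [hβ'eq]; linarith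
  have hIpos : (0:ℝ) < (i : ℝ) := by exact_mod_cast hi
  -- bounding sequences
  set hiF : ℕ → ℝ := fun n =>
    (1 - α) ^ 2 * ((n:ℝ) ^ (α - 1) * ∑ j ∈ Finset.Icc 1 n, (j:ℝ) ^ (-α)) with hiF_def
  set errF : ℕ → ℝ := fun n =>
    ((1 - α) ^ 2) ^ (1 + ε) * (i:ℝ) ^ (-(α * ε)) *
      ((n:ℝ) ^ (ε * (α - γ)) *
        ((n:ℝ) ^ (α * (1 + ε) - 1) * ∑ j ∈ Finset.Icc 1 n, (j:ℝ) ^ (-(α * (1 + ε)))))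
    with errF_def
  -- limits of the bounding sequences
  have hhiF : Tendsto hiF atTop (nhds (1 - α)) := by
    have h := (sum_rpow_asymp α hα hα1).const_mul ((1 - α) ^ 2)
    have hv : (1 - α) ^ 2 * (1 / (1 - α)) = 1 - α := by
      field_simp
    rw [hv] at h
    exact h
  have herrF : Tendsto errF atTop (nhds 0) := by
    have hz : Tendsto (fun n : ℕ => (n:ℝ) ^ (ε * (α - γ))) atTop (nhds 0) := by
      have h3 := (tendsto_rpow_neg_atTop (y := ε * (γ - α))
        (by nlinarith)).comp (tendsto_natCast_atTop_atTop (R := ℝ))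
      refine h3.congr fun n => ?_
      show ((n:ℝ)) ^ (-(ε * (γ - α))) = (n:ℝ) ^ (ε * (α - γ))
      ring_nf
    have hs := sum_rpow_asymp (α * (1 + ε)) hβ'0 hβ'1
    have hmul := hz.mul hs
    rw [zero_mul] at hmul
    have := hmul.const_mul (((1 - α) ^ 2) ^ (1 + ε) * (i:ℝ) ^ (-(α * ε)))
    rw [mul_zero] at this
    exact this
  have hlow : Tendsto (fun n => hiF n - errF n) atTop (nhds (1 - α)) := by
    have := hhiF.sub herrF
    rw [sub_zero] at this
    exact this
  -- squeeze
  refine tendsto_of_tendsto_of_tendsto_of_le_of_le' hlow hhiF ?_ ?_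
  · -- lower bound
    filter_upwards [eventually_ge_atTop 1] with n hn
    have hN : (0:ℝ) < (n:ℝ) := by exact_mod_cast hn
    have hJ : ∀ j ∈ Finset.Icc 1 n, (0:ℝ) < (j:ℝ) := fun j hj => by
      exact_mod_cast (Finset.mem_Icc.1 hj).1
    -- rewrite goal as K * sum
    have hgoal : ((n : ℝ) ^ (-γ) *
            ∑ j ∈ Finset.Icc 1 n,
              min ((n : ℝ) ^ γ)
                ((1 - α) ^ 2 * (((i : ℝ) / (n : ℝ)) * ((j : ℝ) / (n : ℝ))) ^ (-α))) *
          (i : ℝ) ^ α * (n : ℝ) ^ (-(1 + α - γ))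
        = ((n:ℝ) ^ (-γ) * (i:ℝ) ^ α * (n:ℝ) ^ (-(1 + α - γ))) *
            ∑ j ∈ Finset.Icc 1 n,
              min ((n : ℝ) ^ γ)
                ((1 - α) ^ 2 * (((i : ℝ) / (n : ℝ)) * ((j : ℝ) / (n : ℝ))) ^ (-α)) := by
      ring
    rw [hgoal]
    set K : ℝ := (n:ℝ) ^ (-γ) * (i:ℝ) ^ α * (n:ℝ) ^ (-(1 + α - γ)) with hK_def
    have hK : 0 ≤ K := by positivity
    -- lower: hiF n - errF n ≤ K * sum
    have hsum_low : ∑ j ∈ Finset.Icc 1 n,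
        (K * ((1 - α) ^ 2 * ((i:ℝ) ^ (-α) * (n:ℝ) ^ α * ((j:ℝ) ^ (-α) * (n:ℝ) ^ α)))
          - K * (((1 - α) ^ 2 * ((i:ℝ) ^ (-α) * (n:ℝ) ^ α * ((j:ℝ) ^ (-α) * (n:ℝ) ^ α))) ^ (1 + ε)
              * ((n:ℝ) ^ γ) ^ (-ε)))
        ≤ K * ∑ j ∈ Finset.Icc 1 n,
              min ((n : ℝ) ^ γ)
                ((1 - α) ^ 2 * (((i : ℝ) / (n : ℝ)) * ((j : ℝ) / (n : ℝ))) ^ (-α)) := by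
      rw [Finset.mul_sum]
      refine Finset.sum_le_sum fun j hj => ?_
      have hJj := hJ j hj
      have hexp := expand_aux α (i:ℝ) (j:ℝ) (n:ℝ) hIpos hJj hN
      rw [← hexp, ← mul_sub]
      refine mul_le_mul_of_nonneg_left ?_ hK
      exact min_lb_aux _ _ ε
        (mul_pos hc (Real.rpow_pos_of_pos (by positivity) _))
        (Real.rpow_pos_of_pos hN _) hε
    refine le_trans (le_of_eq ?_) hsum_low
    rw [Finset.sum_sub_distrib]
    congr 1
    · -- hiF n = ∑ K * a_j
      rw [hiF_def]
      simp only
      rw [show (1 - α) ^ 2 * ((n:ℝ) ^ (α - 1) * ∑ j ∈ Finset.Icc 1 n, (j:ℝ) ^ (-α))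
          = ∑ j ∈ Finset.Icc 1 n, ((1 - α) ^ 2 * (n:ℝ) ^ (α - 1)) * (j:ℝ) ^ (-α) by
        rw [← Finset.mul_sum]; ring]
      refine Finset.sum_congr rfl fun j hj => ?_
      exact (kmul_aux α γ (i:ℝ) (j:ℝ) (n:ℝ) ((1-α)^2) hIpos (hJ j hj) hN).symm
    · -- errF n = ∑ K * e_j
      rw [errF_def]
      simp only
      rw [show ((1 - α) ^ 2) ^ (1 + ε) * (i:ℝ) ^ (-(α * ε)) *
            ((n:ℝ) ^ (ε * (α - γ)) *
              ((n:ℝ) ^ (α * (1 + ε) - 1) * ∑ j ∈ Finset.Icc 1 n, (j:ℝ) ^ (-(α * (1 + ε)))))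
          = ∑ j ∈ Finset.Icc 1 n,
              (((1 - α) ^ 2) ^ (1 + ε) * (i:ℝ) ^ (-(α * ε)) *
                (n:ℝ) ^ (ε * (α - γ) + (α * (1 + ε) - 1))) * (j:ℝ) ^ (-(α * (1 + ε))) by
        rw [← Finset.mul_sum, Real.rpow_add hN]; ring]
      refine Finset.sum_congr rfl fun j hj => ?_
      exact (kmul2_aux α γ ε (i:ℝ) (j:ℝ) (n:ℝ) ((1-α)^2) hIpos (hJ j hj) hN hc).symm
  · -- upper bound
    filter_upwards [eventually_ge_atTop 1] with n hn
    have hN : (0:ℝ) < (n:ℝ) := by exact_mod_cast hn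
    have hJ : ∀ j ∈ Finset.Icc 1 n, (0:ℝ) < (j:ℝ) := fun j hj => by
      exact_mod_cast (Finset.mem_Icc.1 hj).1
    have hgoal : ((n : ℝ) ^ (-γ) *
            ∑ j ∈ Finset.Icc 1 n,
              min ((n : ℝ) ^ γ)
                ((1 - α) ^ 2 * (((i : ℝ) / (n : ℝ)) * ((j : ℝ) / (n : ℝ))) ^ (-α))) *
          (i : ℝ) ^ α * (n : ℝ) ^ (-(1 + α - γ))
        = ((n:ℝ) ^ (-γ) * (i:ℝ) ^ α * (n:ℝ) ^ (-(1 + α - γ))) *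
            ∑ j ∈ Finset.Icc 1 n,
              min ((n : ℝ) ^ γ)
                ((1 - α) ^ 2 * (((i : ℝ) / (n : ℝ)) * ((j : ℝ) / (n : ℝ))) ^ (-α)) := by
      ring
    rw [hgoal]
    set K : ℝ := (n:ℝ) ^ (-γ) * (i:ℝ) ^ α * (n:ℝ) ^ (-(1 + α - γ)) with hK_def
    have hK : 0 ≤ K := by positivity
    calc K * ∑ j ∈ Finset.Icc 1 n,
            min ((n : ℝ) ^ γ)
              ((1 - α) ^ 2 * (((i : ℝ) / (n : ℝ)) * ((j : ℝ) / (n : ℝ))) ^ (-α))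
        ≤ K * ∑ j ∈ Finset.Icc 1 n,
            (1 - α) ^ 2 * (((i : ℝ) / (n : ℝ)) * ((j : ℝ) / (n : ℝ))) ^ (-α) := by
          refine mul_le_mul_of_nonneg_left (Finset.sum_le_sum fun j hj => min_le_right _ _) hK
      _ = ∑ j ∈ Finset.Icc 1 n,
            K * ((1 - α) ^ 2 * ((i:ℝ) ^ (-α) * (n:ℝ) ^ α * ((j:ℝ) ^ (-α) * (n:ℝ) ^ α))) := by
          rw [Finset.mul_sum]
          refine Finset.sum_congr rfl fun j hj => ?_
          rw [expand_aux α (i:ℝ) (j:ℝ) (n:ℝ) hIpos (hJ j hj) hN]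
      _ = ∑ j ∈ Finset.Icc 1 n, ((1 - α) ^ 2 * (n:ℝ) ^ (α - 1)) * (j:ℝ) ^ (-α) := by
          refine Finset.sum_congr rfl fun j hj => ?_
          exact kmul_aux α γ (i:ℝ) (j:ℝ) (n:ℝ) ((1-α)^2) hIpos (hJ j hj) hN
      _ = hiF n := by
          rw [hiF_def]; simp only
          rw [← Finset.mul_sum]; ring
end

section
/- Let p ≥ 2, q = p/(p−1), and let U ∈ L^p(I²) be nonnegative with ∫_I U(x,y) dy = 1 for a.e. x ∈ I. Let D, f : ℝ → ℝ be Lipschitz with constants L_D, L_f, and set L = max(L_D, L_f). Fix τ > 0, g ∈ L^q(I), and define K on the space M = C([0,τ]; L^q(I)) by (Ku)(t) = g + ∫_0^t ( ∫_I U(·,y) D(u(y,s) − u(·,s)) dy + f(u(·,s)) ) ds. Then for all u, v ∈ M: ‖Ku − Kv‖_M ≤ L τ (‖U‖_{L^p(I²)} + 2) ‖u − v‖_M, where ‖·‖_M denotes the supremum over t ∈ [0,τ] of the L^q(I) norm. In particular, if τ = (2L(‖U‖_{L^p(I²)} + 2))^{−1}, then K is a contraction with constant 1/2. -/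
open MeasureTheory Set Filter intervalIntegral
open scoped ENNReal NNReal

/-- Lebesgue measure restricted to the unit interval `I = [0,1]`. -/
noncomputable def mu01 : Measure ℝ := volume.restrict (Set.Icc 0 1)

/-- The product measure on the unit square `I²`. -/
noncomputable def mu2 : Measure (ℝ × ℝ) := mu01.prod mu01

/-- The exponent `q = p/(p-1)` conjugate to `p`, as an extended nonnegative real. -/
noncomputable def qExp (p : ℝ) : ENNReal := ENNReal.ofReal (p / (p - 1))

/-- The Picard operator `(Kw)(t,x) = g(x) + ∫_0^t (∫_I U(x,y) D(w(y,s)-w(x,s)) dy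
+ f(w(x,s))) ds`. -/
noncomputable def picard (U : ℝ → ℝ → ℝ) (D f : ℝ → ℝ) (g : ℝ → ℝ)
    (w : ℝ → ℝ → ℝ) (t x : ℝ) : ℝ :=
  g x + ∫ s in (0 : ℝ)..t, ((∫ y, U x y * D (w s y - w s x) ∂mu01) + f (w s x))

instance : IsProbabilityMeasure mu01 := ⟨by simp [mu01, Real.volume_Icc]⟩
instance : IsProbabilityMeasure mu2 := by unfold mu2; infer_instance

section helpers

/-- Lyapunov inequality for `ℝ≥0∞`-valued functions on a probability measure. -/
lemma lyapunov {α : Type*} [MeasurableSpace α] {μ : Measure α} [IsProbabilityMeasure μ]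
    {A : α → ℝ≥0∞} (hA : AEMeasurable A μ) {r s : ℝ} (hr : 0 < r) (hrs : r ≤ s) :
    (∫⁻ x, A x ^ r ∂μ) ^ (1/r) ≤ (∫⁻ x, A x ^ s ∂μ) ^ (1/s) := by
  rcases eq_or_lt_of_le hrs with h | h
  · subst h; rfl
  have hs : 0 < s := hr.trans h
  have hconj : (s/r).HolderConjugate ((s/r)/(s/r - 1)) :=
    Real.HolderConjugate.conjExponent (by rw [lt_div_iff₀ hr]; linarith)
  have key := ENNReal.lintegral_mul_le_Lp_mul_Lq μ hconj
      (f := fun x => A x ^ r) (g := fun _ => 1) (hA.pow_const r) aemeasurable_const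
  simp only [Pi.mul_apply, mul_one, ENNReal.one_rpow, lintegral_one, measure_univ,
    ENNReal.one_rpow, one_mul] at key
  have key2 : (∫⁻ x, A x ^ r ∂μ) ≤ (∫⁻ x, A x ^ s ∂μ) ^ (r/s) := by
    calc (∫⁻ x, A x ^ r ∂μ) ≤ (∫⁻ x, (A x ^ r) ^ (s/r) ∂μ) ^ (1/(s/r)) := key
    _ = (∫⁻ x, A x ^ s ∂μ) ^ (r/s) := by
        rw [one_div_div]
        congr 1
        refine lintegral_congr fun x => ?_
        rw [← ENNReal.rpow_mul, mul_div_cancel₀ _ hr.ne']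
  calc (∫⁻ x, A x ^ r ∂μ) ^ (1/r) ≤ ((∫⁻ x, A x ^ s ∂μ) ^ (r/s)) ^ (1/r) :=
        ENNReal.rpow_le_rpow key2 (by positivity)
  _ = (∫⁻ x, A x ^ s ∂μ) ^ (1/s) := by
        rw [← ENNReal.rpow_mul]; congr 1; field_simp

lemma aesm_pair {τ : ℝ} {w : ℝ → ℝ → ℝ}
    (hw : AEStronglyMeasurable (Function.uncurry w) (volume.prod mu01)) :
    AEStronglyMeasurable (fun sx : ℝ × ℝ => w sx.1 sx.2)
      ((volume.restrict (Icc 0 τ)).prod mu01) := by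
  rw [Measure.restrict_prod_eq_prod_univ]
  exact hw.restrict

lemma aesm_triple_u {τ : ℝ} {w : ℝ → ℝ → ℝ}
    (hw : AEStronglyMeasurable (Function.uncurry w) (volume.prod mu01)) :
    AEStronglyMeasurable (fun z : (ℝ × ℝ) × ℝ => w z.1.1 z.2)
      (((volume.restrict (Icc 0 τ)).prod mu01).prod mu01) := by
  have hg : Measure.QuasiMeasurePreserving (fun z : (ℝ × ℝ) × ℝ => (z.1.1, z.2))
      (((volume.restrict (Icc 0 τ)).prod mu01).prod mu01)
      ((volume.restrict (Icc 0 τ)).prod mu01) := by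
    refine ⟨(measurable_fst.comp measurable_fst).prodMk measurable_snd, ?_⟩
    have h : (fun z : (ℝ × ℝ) × ℝ => ((z.1.1 : ℝ), z.2)) = Prod.map Prod.fst id := rfl
    rw [h, ← Measure.map_prod_map _ _ measurable_fst measurable_id]
    simp only [Measure.map_id, Measure.map_fst_prod, measure_univ, one_smul]
    exact Measure.AbsolutelyContinuous.rfl
  exact (aesm_pair hw).comp_quasiMeasurePreserving hg

lemma aesm_triple_x {τ : ℝ} {w : ℝ → ℝ → ℝ}
    (hw : AEStronglyMeasurable (Function.uncurry w) (volume.prod mu01)) :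
    AEStronglyMeasurable (fun z : (ℝ × ℝ) × ℝ => w z.1.1 z.1.2)
      (((volume.restrict (Icc 0 τ)).prod mu01).prod mu01) :=
  (aesm_pair hw).comp_quasiMeasurePreserving Measure.quasiMeasurePreserving_fst

lemma aesm_triple_U {τ : ℝ} {U : ℝ → ℝ → ℝ}
    (hU : AEStronglyMeasurable (fun z : ℝ × ℝ => U z.1 z.2) mu2) :
    AEStronglyMeasurable (fun z : (ℝ × ℝ) × ℝ => U z.1.2 z.2)
      (((volume.restrict (Icc 0 τ)).prod mu01).prod mu01) := by
  have hU' : AEStronglyMeasurable (fun z : ℝ × ℝ => U z.1 z.2) (mu01.prod mu01) := hU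
  have hg : Measure.QuasiMeasurePreserving (fun z : (ℝ × ℝ) × ℝ => (z.1.2, z.2))
      (((volume.restrict (Icc 0 τ)).prod mu01).prod mu01) (mu01.prod mu01) := by
    refine ⟨(measurable_snd.comp measurable_fst).prodMk measurable_snd, ?_⟩
    have h : (fun z : (ℝ × ℝ) × ℝ => ((z.1.2 : ℝ), z.2)) = Prod.map Prod.snd id := rfl
    rw [h, ← Measure.map_prod_map _ _ measurable_snd measurable_id]
    simp only [Measure.map_id, Measure.map_snd_prod]
    exact Measure.smul_absolutelyContinuous.prod Measure.AbsolutelyContinuous.rfl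
  exact hU'.comp_quasiMeasurePreserving hg

lemma slice_right {τ : ℝ} {F : ℝ × ℝ → ℝ}
    (hF : AEStronglyMeasurable F ((volume.restrict (Icc 0 τ)).prod mu01)) :
    ∀ᵐ x ∂mu01, AEStronglyMeasurable (fun s => F (s, x)) (volume.restrict (Icc 0 τ)) := by
  have hswap : AEStronglyMeasurable (fun z : ℝ × ℝ => F (z.2, z.1))
      (mu01.prod (volume.restrict (Icc 0 τ))) :=
    hF.comp_quasiMeasurePreserving Measure.measurePreserving_swap.quasiMeasurePreserving
  exact hswap.prodMk_left

lemma aemeas_lint {α β : Type*} [MeasurableSpace α] [MeasurableSpace β]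
    {μ : Measure α} {ν : Measure β} [SFinite ν] {f : α × β → ℝ≥0∞}
    (hf : AEMeasurable f (μ.prod ν)) :
    AEMeasurable (fun x => ∫⁻ y, f (x, y) ∂ν) μ := by
  refine ⟨fun x => ∫⁻ y, hf.mk f (x, y) ∂ν, hf.measurable_mk.lintegral_prod_right', ?_⟩
  filter_upwards [Measure.ae_ae_of_ae_prod hf.ae_eq_mk] with x hx
  exact lintegral_congr_ae hx

lemma lp_smul {μ : Measure ℝ} {c : ℝ≥0∞} (hc : c ≠ ∞) (A : ℝ → ℝ≥0∞) {r : ℝ} (hr : 0 < r) :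
    (∫⁻ x, (c * A x) ^ r ∂μ) ^ (1/r) = c * (∫⁻ x, A x ^ r ∂μ) ^ (1/r) := by
  simp_rw [ENNReal.mul_rpow_of_nonneg _ _ hr.le]
  rw [lintegral_const_mul' _ _ (ENNReal.rpow_ne_top_of_nonneg hr.le hc),
    ENNReal.mul_rpow_of_nonneg _ _ (by positivity : (0:ℝ) ≤ 1/r), ← ENNReal.rpow_mul,
    mul_one_div_cancel hr.ne', ENNReal.rpow_one]

lemma sup_lt_top {τ : ℝ} {q : ℝ≥0∞} (hq1 : 1 ≤ q) {u : ℝ → ℝ → ℝ}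
    (huq : ∀ t ∈ Icc (0:ℝ) τ, MemLp (u t) q mu01)
    (hucont : ∀ t₀ ∈ Icc (0:ℝ) τ,
      Tendsto (fun t => eLpNorm (fun x => u t x - u t₀ x) q mu01)
        (nhdsWithin t₀ (Icc 0 τ)) (nhds 0)) :
    (⨆ t ∈ Icc (0:ℝ) τ, eLpNorm (u t) q mu01) < ∞ := by
  have hev : ∀ t₀ ∈ Icc (0:ℝ) τ, ∃ O ∈ nhds t₀,
      ∀ t ∈ O ∩ Icc (0:ℝ) τ, eLpNorm (u t) q mu01 ≤ eLpNorm (u t₀) q mu01 + 1 := by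
    intro t₀ ht₀
    have h1 : ∀ᶠ t in nhdsWithin t₀ (Icc 0 τ),
        eLpNorm (fun x => u t x - u t₀ x) q mu01 < 1 :=
      (hucont t₀ ht₀).eventually_lt_const (by norm_num)
    rcases mem_nhdsWithin_iff_exists_mem_nhds_inter.1 h1 with ⟨O, hO, hOsub⟩
    refine ⟨O, hO, fun t ht => ?_⟩
    have hlt := hOsub ht
    have htIcc : t ∈ Icc (0:ℝ) τ := ht.2
    have h2 : eLpNorm (u t) q mu01 ≤
        eLpNorm (fun x => u t x - u t₀ x) q mu01 + eLpNorm (u t₀) q mu01 := by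
      have := eLpNorm_add_le (((huq t htIcc).1).sub ((huq t₀ ht₀).1)) ((huq t₀ ht₀).1) hq1
      simp only [sub_add_cancel] at this; exact this
    calc eLpNorm (u t) q mu01 ≤ _ := h2
      _ ≤ 1 + eLpNorm (u t₀) q mu01 := add_le_add_left hlt.le _
      _ = eLpNorm (u t₀) q mu01 + 1 := add_comm _ _
  classical
  choose! O hO hObound using hev
  obtain ⟨T, hTmem, hTcov⟩ := isCompact_Icc.elim_nhds_subcover O (fun x hx => hO x hx)
  by_cases hT : T = ∅
  · subst hT
    simp only [Finset.notMem_empty, iUnion_of_empty, iUnion_empty] at hTcov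
    have : Icc (0:ℝ) τ = ∅ := eq_empty_of_subset_empty hTcov
    simp [this]
  have hbound : (⨆ t ∈ Icc (0:ℝ) τ, eLpNorm (u t) q mu01) ≤
      (T.sup fun t₀ => eLpNorm (u t₀) q mu01) + 1 := by
    refine iSup₂_le fun t ht => ?_
    rcases mem_iUnion₂.1 (hTcov ht) with ⟨t₀, ht₀T, htO⟩
    exact (hObound t₀ (hTmem t₀ ht₀T) t ⟨htO, ht⟩).trans
      (add_le_add_left (Finset.le_sup (f := fun t₀ => eLpNorm (u t₀) q mu01) ht₀T) 1)
  refine lt_of_le_of_lt hbound ?_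
  refine ENNReal.add_lt_top.2 ⟨?_, ENNReal.one_lt_top⟩
  refine (Finset.sup_lt_iff (by simp : (⊥:ℝ≥0∞) < ∞)).2 fun t₀ ht₀ => ?_
  exact (huq t₀ (hTmem t₀ ht₀)).2

end helpers

/-- contraction estimate for the Picard operator `K` on
`M = C([0,τ]; L^q(I))`: `‖Ku - Kv‖_M ≤ Lτ(‖U‖_{L^p(I²)} + 2)‖u - v‖_M`, and in
particular if `τ = (2L(‖U‖_{L^p} + 2))⁻¹` then `K` is a `1/2`-contraction. -/
theorem picard_contraction (p : ℝ) (hp : 2 ≤ p)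
    (U : ℝ → ℝ → ℝ) (hUnn : ∀ x y, 0 ≤ U x y)
    (hU : MemLp (fun z : ℝ × ℝ => U z.1 z.2) (ENNReal.ofReal p) mu2)
    (hUnorm : ∀ᵐ x ∂mu01, ∫ y, U x y ∂mu01 = 1)
    (LD Lf : NNReal) (D f : ℝ → ℝ)
    (hD : LipschitzWith LD D) (hf : LipschitzWith Lf f)
    (τ : ℝ) (hτ : 0 < τ)
    (g : ℝ → ℝ) (hg : MemLp g (qExp p) mu01)
    (u v : ℝ → ℝ → ℝ)
    (hum : AEStronglyMeasurable (Function.uncurry u) (volume.prod mu01))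
    (hvm : AEStronglyMeasurable (Function.uncurry v) (volume.prod mu01))
    (huq : ∀ t ∈ Icc (0 : ℝ) τ, MemLp (u t) (qExp p) mu01)
    (hvq : ∀ t ∈ Icc (0 : ℝ) τ, MemLp (v t) (qExp p) mu01)
    (hucont : ∀ t₀ ∈ Icc (0 : ℝ) τ,
      Tendsto (fun t => eLpNorm (fun x => u t x - u t₀ x) (qExp p) mu01)
        (nhdsWithin t₀ (Icc 0 τ)) (nhds 0))
    (hvcont : ∀ t₀ ∈ Icc (0 : ℝ) τ,
      Tendsto (fun t => eLpNorm (fun x => v t x - v t₀ x) (qExp p) mu01)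
        (nhdsWithin t₀ (Icc 0 τ)) (nhds 0)) :
    (⨆ t ∈ Icc (0 : ℝ) τ,
        eLpNorm (fun x => picard U D f g u t x - picard U D f g v t x) (qExp p) mu01)
      ≤ ENNReal.ofReal (max (LD : ℝ) (Lf : ℝ) * τ)
          * (eLpNorm (fun z : ℝ × ℝ => U z.1 z.2) (ENNReal.ofReal p) mu2 + 2)
          * ⨆ t ∈ Icc (0 : ℝ) τ, eLpNorm (fun x => u t x - v t x) (qExp p) mu01
    ∧
    (τ = (2 * max (LD : ℝ) (Lf : ℝ) *
        ((eLpNorm (fun z : ℝ × ℝ => U z.1 z.2) (ENNReal.ofReal p) mu2).toReal + 2))⁻¹ →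
      (⨆ t ∈ Icc (0 : ℝ) τ,
          eLpNorm (fun x => picard U D f g u t x - picard U D f g v t x) (qExp p) mu01)
        ≤ 2⁻¹ * ⨆ t ∈ Icc (0 : ℝ) τ, eLpNorm (fun x => u t x - v t x) (qExp p) mu01) := by
  ------------------------------------------------------------------ exponents
  have hp1 : (1:ℝ) < p := by linarith
  have hp0 : (0:ℝ) < p := by linarith
  set r : ℝ := p / (p - 1) with hr_def
  have hpr : p.HolderConjugate r := Real.HolderConjugate.conjExponent hp1
  have hrp : r.HolderConjugate p := hpr.symm
  have hr1 : 1 < r := by rw [hr_def, lt_div_iff₀ (by linarith)]; linarith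
  have hr0 : 0 < r := zero_lt_one.trans hr1
  have hrlep : r ≤ p := by
    rw [hr_def, div_le_iff₀ (by linarith : (0:ℝ) < p - 1)]; nlinarith
  have hq_eq : qExp p = ENNReal.ofReal r := rfl
  have hq0 : qExp p ≠ 0 := by
    rw [hq_eq, Ne, ENNReal.ofReal_eq_zero, not_le]; exact hr0
  have hqtop : qExp p ≠ ∞ := ENNReal.ofReal_ne_top
  have hqr : (qExp p).toReal = r := by rw [hq_eq, ENNReal.toReal_ofReal hr0.le]
  have hq1 : 1 ≤ qExp p := by
    rw [hq_eq]; exact ENNReal.one_le_ofReal.2 hr1.le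
  have elp : ∀ h : ℝ → ℝ,
      eLpNorm h (qExp p) mu01 = (∫⁻ x, (‖h x‖₊ : ℝ≥0∞) ^ r ∂mu01) ^ (1/r) := fun h => by
    rw [eLpNorm_eq_lintegral_rpow_enorm_toReal hq0 hqtop, hqr]; rfl
  ------------------------------------------------------------------ Lipschitz
  set L : ℝ≥0 := max LD Lf with hL_def
  have hDL : LipschitzWith L D := hD.weaken (le_max_left _ _)
  have hfL : LipschitzWith L f := hf.weaken (le_max_right _ _)
  have hLmax : max (LD:ℝ) (Lf:ℝ) = (L:ℝ) := by simp [hL_def]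
  have hLtop : (L:ℝ≥0∞) ≠ ∞ := ENNReal.coe_ne_top
  have hDlip : ∀ a b : ℝ, (‖D a - D b‖₊ : ℝ≥0∞) ≤ (L:ℝ≥0∞) * ‖a - b‖₊ := by
    intro a b
    have := hDL a b
    rwa [edist_eq_enorm_sub, edist_eq_enorm_sub] at this
  have hflip : ∀ a b : ℝ, (‖f a - f b‖₊ : ℝ≥0∞) ≤ (L:ℝ≥0∞) * ‖a - b‖₊ := by
    intro a b
    have := hfL a b
    rwa [edist_eq_enorm_sub, edist_eq_enorm_sub] at this
  ------------------------------------------------------------------ abbreviations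
  set N : ℝ≥0∞ := eLpNorm (fun z : ℝ × ℝ => U z.1 z.2) (ENNReal.ofReal p) mu2 with hN_def
  set S : ℝ≥0∞ :=
    ⨆ t ∈ Icc (0 : ℝ) τ, eLpNorm (fun x => u t x - v t x) (qExp p) mu01 with hS_def
  set ν : Measure ℝ := volume.restrict (Icc 0 τ) with hν_def
  have hνuniv : ν univ = ENNReal.ofReal τ := by
    rw [hν_def, Measure.restrict_apply_univ, Real.volume_Icc, sub_zero]
  have hνtop : ν univ ≠ ∞ := by rw [hνuniv]; exact ENNReal.ofReal_ne_top
  set A : ℝ → ℝ≥0∞ := fun x => (∫⁻ y, (‖U x y‖₊ : ℝ≥0∞) ^ p ∂mu01) ^ (1/p) with hA_def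
  set Au : ℝ × ℝ → ℝ := fun sx =>
    (∫ y, U sx.2 y * D (u sx.1 y - u sx.1 sx.2) ∂mu01) + f (u sx.1 sx.2) with hAu_def
  set Av : ℝ × ℝ → ℝ := fun sx =>
    (∫ y, U sx.2 y * D (v sx.1 y - v sx.1 sx.2) ∂mu01) + f (v sx.1 sx.2) with hAv_def
  set G : ℝ × ℝ → ℝ := fun sx =>
    (∫ y, U sx.2 y * (D (u sx.1 y - u sx.1 sx.2) - D (v sx.1 y - v sx.1 sx.2)) ∂mu01)
      + (f (u sx.1 sx.2) - f (v sx.1 sx.2)) with hG_def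
  set Su : ℝ≥0∞ := ⨆ t ∈ Icc (0 : ℝ) τ, eLpNorm (u t) (qExp p) mu01 with hSu_def
  set Sv : ℝ≥0∞ := ⨆ t ∈ Icc (0 : ℝ) τ, eLpNorm (v t) (qExp p) mu01 with hSv_def
  have hSu_top : Su < ∞ := sup_lt_top hq1 huq hucont
  have hSv_top : Sv < ∞ := sup_lt_top hq1 hvq hvcont
  ------------------------------------------------------------------ measurability of U
  have hUm : AEStronglyMeasurable (fun z : ℝ × ℝ => U z.1 z.2) mu2 := hU.1
  have hmu2 : mu2 = mu01.prod mu01 := rfl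
  have hUm' : AEStronglyMeasurable (fun z : ℝ × ℝ => U z.1 z.2) (mu01.prod mu01) := by
    rw [← hmu2]; exact hUm
  have hUsl : ∀ᵐ x ∂mu01, AEStronglyMeasurable (U x) mu01 := hUm'.prodMk_left
  have hUmeasPow : AEMeasurable (fun z : ℝ × ℝ => (‖U z.1 z.2‖₊ : ℝ≥0∞) ^ p)
      (mu01.prod mu01) := hUm'.enorm.pow_const p
  have hA_meas : AEMeasurable A mu01 := (aemeas_lint hUmeasPow).pow_const _
  have hNfin : N ≠ ∞ := hU.2.ne
  have hA_intp : ∫⁻ x, A x ^ p ∂mu01 = N ^ p := by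
    have h1 : ∀ x, A x ^ p = ∫⁻ y, (‖U x y‖₊ : ℝ≥0∞) ^ p ∂mu01 := fun x => by
      rw [hA_def, ← ENNReal.rpow_mul, one_div_mul_cancel hp0.ne', ENNReal.rpow_one]
    simp_rw [h1]
    rw [← MeasureTheory.lintegral_prod _ hUmeasPow, hN_def,
      eLpNorm_eq_lintegral_rpow_enorm_toReal (by simp [ENNReal.ofReal_eq_zero]; linarith)
        ENNReal.ofReal_ne_top,
      ENNReal.toReal_ofReal hp0.le, ← ENNReal.rpow_mul, one_div_mul_cancel hp0.ne',
      ENNReal.rpow_one, hmu2]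
    rfl
  have hA_fin : ∀ᵐ x ∂mu01, A x < ∞ := by
    have hlt : ∫⁻ x, A x ^ p ∂mu01 ≠ ∞ := by
      rw [hA_intp]; exact (ENNReal.rpow_lt_top_of_nonneg hp0.le hNfin).ne
    filter_upwards [ae_lt_top' (hA_meas.pow_const p) hlt] with x hx
    by_contra h
    rw [not_lt, top_le_iff] at h
    rw [h, ENNReal.top_rpow_of_pos hp0] at hx
    exact (lt_irrefl _ hx).elim
  have hA_q : (∫⁻ x, A x ^ r ∂mu01) ^ (1/r) ≤ N := by
    refine (lyapunov hA_meas hr0 hrlep).trans_eq ?_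
    rw [hA_intp, ← ENNReal.rpow_mul, mul_one_div_cancel hp0.ne', ENNReal.rpow_one]
  have hUint : ∀ᵐ x ∂mu01, Integrable (U x) mu01 ∧
      ∫⁻ y, (‖U x y‖₊ : ℝ≥0∞) ∂mu01 = 1 := by
    filter_upwards [hUnorm, hUsl] with x hx1 hx2
    have hint : Integrable (U x) mu01 := by
      by_contra h
      rw [integral_undef h] at hx1
      norm_num at hx1
    refine ⟨hint, ?_⟩
    have h2 : ∀ y, (‖U x y‖₊ : ℝ≥0∞) = ENNReal.ofReal (U x y) := fun y =>
      (Real.enorm_eq_ofReal (hUnn x y))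
    simp_rw [h2]
    rw [← ofReal_integral_eq_lintegral_ofReal hint (Eventually.of_forall fun y => hUnn x y),
      hx1, ENNReal.ofReal_one]
  ------------------------------------------------------------------ joint measurability
  have hjointAu : AEStronglyMeasurable Au (ν.prod mu01) := by
    refine AEStronglyMeasurable.add ?_ ?_
    · exact ((aesm_triple_U hUm).mul
        (hDL.continuous.comp_aestronglyMeasurable
          ((aesm_triple_u hum).sub (aesm_triple_x hum)))).integral_prod_right'
    · exact hfL.continuous.comp_aestronglyMeasurable (aesm_pair hum)
  have hjointAv : AEStronglyMeasurable Av (ν.prod mu01) := by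
    refine AEStronglyMeasurable.add ?_ ?_
    · exact ((aesm_triple_U hUm).mul
        (hDL.continuous.comp_aestronglyMeasurable
          ((aesm_triple_u hvm).sub (aesm_triple_x hvm)))).integral_prod_right'
    · exact hfL.continuous.comp_aestronglyMeasurable (aesm_pair hvm)
  have hjointG : AEStronglyMeasurable G (ν.prod mu01) := by
    refine AEStronglyMeasurable.add ?_ ?_
    · exact ((aesm_triple_U hUm).mul
        ((hDL.continuous.comp_aestronglyMeasurable
          ((aesm_triple_u hum).sub (aesm_triple_x hum))).sub
         (hDL.continuous.comp_aestronglyMeasurable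
          ((aesm_triple_u hvm).sub (aesm_triple_x hvm))))).integral_prod_right'
    · exact (hfL.continuous.comp_aestronglyMeasurable (aesm_pair hum)).sub
        (hfL.continuous.comp_aestronglyMeasurable (aesm_pair hvm))
  have hAux : ∀ᵐ x ∂mu01, AEStronglyMeasurable (fun s => Au (s, x)) ν := slice_right hjointAu
  have hAvx : ∀ᵐ x ∂mu01, AEStronglyMeasurable (fun s => Av (s, x)) ν := slice_right hjointAv
  have hGx : ∀ᵐ x ∂mu01, AEStronglyMeasurable (fun s => G (s, x)) ν := slice_right hjointG
  ------------------------------------------------------------------ time-slice integrability of u, v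
  have hslice : ∀ w : ℝ → ℝ → ℝ, AEStronglyMeasurable (Function.uncurry w) (volume.prod mu01) →
      (⨆ t ∈ Icc (0 : ℝ) τ, eLpNorm (w t) (qExp p) mu01) < ∞ →
      (∀ t ∈ Icc (0 : ℝ) τ, MemLp (w t) (qExp p) mu01) →
      ∀ᵐ x ∂mu01, ∫⁻ s, (‖w s x‖₊ : ℝ≥0∞) ∂ν < ∞ := by
    intro w hwm hSw hwq
    have hswap : AEStronglyMeasurable (fun z : ℝ × ℝ => w z.2 z.1) (mu01.prod ν) :=
      (aesm_pair hwm).comp_quasiMeasurePreserving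
        Measure.measurePreserving_swap.quasiMeasurePreserving
    have hjoint : AEMeasurable (fun z : ℝ × ℝ => (‖w z.2 z.1‖₊ : ℝ≥0∞)) (mu01.prod ν) :=
      hswap.enorm
    have htot : ∫⁻ x, ∫⁻ s, (‖w s x‖₊ : ℝ≥0∞) ∂ν ∂mu01 < ∞ := by
      rw [lintegral_lintegral_swap hjoint]
      calc ∫⁻ s, ∫⁻ x, (‖w s x‖₊ : ℝ≥0∞) ∂mu01 ∂ν
          ≤ ∫⁻ _, (⨆ t ∈ Icc (0 : ℝ) τ, eLpNorm (w t) (qExp p) mu01) ∂ν := by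
            refine lintegral_mono_ae ?_
            filter_upwards [ae_restrict_mem measurableSet_Icc] with s hs
            calc ∫⁻ x, (‖w s x‖₊ : ℝ≥0∞) ∂mu01 = eLpNorm (w s) 1 mu01 := by
                  rw [eLpNorm_one_eq_lintegral_enorm]; rfl
              _ ≤ eLpNorm (w s) (qExp p) mu01 :=
                  eLpNorm_le_eLpNorm_of_exponent_le hq1 (hwq s hs).1
              _ ≤ _ := le_biSup (f := fun t => eLpNorm (w t) (qExp p) mu01) hs
        _ = _ * ν univ := lintegral_const _
        _ < ∞ := ENNReal.mul_lt_top hSw (lt_top_iff_ne_top.2 hνtop)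
    exact ae_lt_top' (aemeas_lint hjoint) htot.ne
  have hufin : ∀ᵐ x ∂mu01, ∫⁻ s, (‖u s x‖₊ : ℝ≥0∞) ∂ν < ∞ := hslice u hum hSu_top huq
  have hvfin : ∀ᵐ x ∂mu01, ∫⁻ s, (‖v s x‖₊ : ℝ≥0∞) ∂ν < ∞ := hslice v hvm hSv_top hvq
  ------------------------------------------------------------------ per-point bounds (integrand)
  -- a.e. x, for all s ∈ [0,τ]: inner-y integrand integrable and Au-bound
  have hAw_bound : ∀ w : ℝ → ℝ → ℝ, (∀ t ∈ Icc (0 : ℝ) τ, MemLp (w t) (qExp p) mu01) →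
      (⨆ t ∈ Icc (0 : ℝ) τ, eLpNorm (w t) (qExp p) mu01) < ∞ →
      ∀ᵐ x ∂mu01, ∀ s ∈ Icc (0 : ℝ) τ,
        Integrable (fun y => U x y * D (w s y - w s x)) mu01 ∧
        ∫⁻ y, (‖U x y * D (w s y - w s x)‖₊ : ℝ≥0∞) ∂mu01 ≤
          (‖D 0‖₊ : ℝ≥0∞) + (L:ℝ≥0∞) * ‖w s x‖₊ +
            (L:ℝ≥0∞) * A x * (⨆ t ∈ Icc (0 : ℝ) τ, eLpNorm (w t) (qExp p) mu01) := by
    intro w hwq hSw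
    filter_upwards [hUsl, hUint, hA_fin] with x hUx hU1 hAx
    intro s hs
    have hwsm : AEStronglyMeasurable (w s) mu01 := (hwq s hs).1
    have hest : ∫⁻ y, (‖U x y * D (w s y - w s x)‖₊ : ℝ≥0∞) ∂mu01 ≤
        (‖D 0‖₊ : ℝ≥0∞) + (L:ℝ≥0∞) * ‖w s x‖₊ +
          (L:ℝ≥0∞) * A x * (⨆ t ∈ Icc (0 : ℝ) τ, eLpNorm (w t) (qExp p) mu01) := by
      have hptw : ∀ y, (‖U x y * D (w s y - w s x)‖₊ : ℝ≥0∞) ≤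
          (‖U x y‖₊ : ℝ≥0∞) * ((‖D 0‖₊ + (L:ℝ≥0∞) * ‖w s x‖₊) + (L:ℝ≥0∞) * ‖w s y‖₊) := by
        intro y
        rw [nnnorm_mul, ENNReal.coe_mul]
        refine mul_le_mul_right ?_ _
        have h1 : (‖D (w s y - w s x)‖₊ : ℝ≥0∞) ≤
            ‖D (w s y - w s x) - D 0‖₊ + ‖D 0‖₊ := by
          have h := nnnorm_add_le (D (w s y - w s x) - D 0) (D 0)
          rw [sub_add_cancel] at h
          rw [← ENNReal.coe_add]
          exact_mod_cast h
        refine h1.trans ?_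
        have h2 := hDlip (w s y - w s x) 0
        rw [sub_zero] at h2
        have h3 : (‖w s y - w s x‖₊ : ℝ≥0∞) ≤ ‖w s y‖₊ + ‖w s x‖₊ := by
          exact_mod_cast nnnorm_sub_le _ _
        calc (‖D (w s y - w s x) - D 0‖₊ : ℝ≥0∞) + ‖D 0‖₊
            ≤ (L:ℝ≥0∞) * (‖w s y‖₊ + ‖w s x‖₊) + ‖D 0‖₊ :=
              add_le_add_left (h2.trans (mul_le_mul_right h3 _)) _
          _ = (‖D 0‖₊ + (L:ℝ≥0∞) * ‖w s x‖₊) + (L:ℝ≥0∞) * ‖w s y‖₊ := by ring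
      calc ∫⁻ y, (‖U x y * D (w s y - w s x)‖₊ : ℝ≥0∞) ∂mu01
          ≤ ∫⁻ y, (‖U x y‖₊ : ℝ≥0∞) *
              ((‖D 0‖₊ + (L:ℝ≥0∞) * ‖w s x‖₊) + (L:ℝ≥0∞) * ‖w s y‖₊) ∂mu01 :=
            lintegral_mono fun y => hptw y
        _ = ∫⁻ y, ((‖U x y‖₊ : ℝ≥0∞) * (‖D 0‖₊ + (L:ℝ≥0∞) * ‖w s x‖₊)
              + (L:ℝ≥0∞) * ((‖U x y‖₊ : ℝ≥0∞) * ‖w s y‖₊)) ∂mu01 := by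
            refine lintegral_congr fun y => ?_; ring
        _ = (∫⁻ y, (‖U x y‖₊ : ℝ≥0∞) ∂mu01) * (‖D 0‖₊ + (L:ℝ≥0∞) * ‖w s x‖₊)
              + (L:ℝ≥0∞) * ∫⁻ y, (‖U x y‖₊ : ℝ≥0∞) * ‖w s y‖₊ ∂mu01 := by
            rw [lintegral_add_right', lintegral_mul_const' _ _
                (by exact ENNReal.add_ne_top.2 ⟨ENNReal.coe_ne_top,
                  ENNReal.mul_ne_top hLtop ENNReal.coe_ne_top⟩),
              lintegral_const_mul' _ _ hLtop]
            exact (hUx.enorm.mul hwsm.enorm).const_mul _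
        _ ≤ 1 * (‖D 0‖₊ + (L:ℝ≥0∞) * ‖w s x‖₊) + (L:ℝ≥0∞) *
              (A x * (⨆ t ∈ Icc (0 : ℝ) τ, eLpNorm (w t) (qExp p) mu01)) := by
            refine add_le_add (mul_le_mul_left hU1.2.le _) (mul_le_mul_right ?_ _)
            have hhold := ENNReal.lintegral_mul_le_Lp_mul_Lq mu01 hpr
              hUx.enorm hwsm.enorm
            simp only [enorm_eq_nnnorm] at hhold
            refine hhold.trans ?_
            have hAx' : (∫⁻ y, (‖U x y‖₊ : ℝ≥0∞) ^ p ∂mu01) ^ (1/p) = A x := rfl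
            rw [hAx']
            refine mul_le_mul_right ?_ _
            rw [← elp]
            exact le_biSup (f := fun t => eLpNorm (w t) (qExp p) mu01) hs
        _ = (‖D 0‖₊ : ℝ≥0∞) + (L:ℝ≥0∞) * ‖w s x‖₊ +
              (L:ℝ≥0∞) * A x * (⨆ t ∈ Icc (0 : ℝ) τ, eLpNorm (w t) (qExp p) mu01) := by
            ring
    refine ⟨?_, hest⟩
    refine ⟨hUx.mul (hDL.continuous.comp_aestronglyMeasurable (hwsm.sub aestronglyMeasurable_const)), ?_⟩
    show (∫⁻ y, (‖U x y * D (w s y - w s x)‖₊ : ℝ≥0∞) ∂mu01) < ⊤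
    refine lt_of_le_of_lt hest ?_
    refine ENNReal.add_lt_top.2 ⟨ENNReal.add_lt_top.2
      ⟨ENNReal.coe_lt_top, ENNReal.mul_lt_top ENNReal.coe_lt_top ENNReal.coe_lt_top⟩, ?_⟩
    exact ENNReal.mul_lt_top (ENNReal.mul_lt_top ENNReal.coe_lt_top hAx) hSw
  ------------------------------------------------------------------ key per-time estimate
  have key : ∀ s ∈ Icc (0:ℝ) τ,
      ∫⁻ x, (‖G (s, x)‖₊ : ℝ≥0∞) ^ r ∂mu01 ≤ ((L:ℝ≥0∞) * (N + 2) * S) ^ r := by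
    intro s hs
    have hds_m : AEStronglyMeasurable (fun x => u s x - v s x) mu01 :=
      ((huq s hs).1).sub ((hvq s hs).1)
    set cs : ℝ≥0∞ := (∫⁻ x, (‖u s x - v s x‖₊ : ℝ≥0∞) ^ r ∂mu01) ^ (1/r) with hcs_def
    have hcs_elp : eLpNorm (fun x => u s x - v s x) (qExp p) mu01 = cs := elp _
    have hcsS : cs ≤ S := by
      rw [← hcs_elp]
      exact le_biSup (f := fun t => eLpNorm (fun x => u t x - v t x) (qExp p) mu01) hs
    have hcs_top : cs ≠ ∞ := by
      rw [← hcs_elp]; exact ((huq s hs).sub (hvq s hs)).2.ne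
    have hptwise : ∀ᵐ x ∂mu01, (‖G (s, x)‖₊ : ℝ≥0∞) ≤
        ((L:ℝ≥0∞) * cs) * A x + (2 * (L:ℝ≥0∞)) * ‖u s x - v s x‖₊ := by
      filter_upwards [hUsl, hUint] with x hUx hU1
      have hfpart : (‖f (u s x) - f (v s x)‖₊ : ℝ≥0∞) ≤
          (L:ℝ≥0∞) * ‖u s x - v s x‖₊ := hflip _ _
      have hIpart :
          (‖(∫ y, U x y * (D (u s y - u s x) - D (v s y - v s x)) ∂mu01)‖₊ : ℝ≥0∞) ≤
          ((L:ℝ≥0∞) * cs) * A x + (L:ℝ≥0∞) * ‖u s x - v s x‖₊ := by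
        refine (enorm_integral_le_lintegral_enorm _).trans ?_
        have hptw : ∀ y, (‖U x y * (D (u s y - u s x) - D (v s y - v s x))‖₊ : ℝ≥0∞) ≤
            (L:ℝ≥0∞) * ((‖U x y‖₊ : ℝ≥0∞) * ‖u s y - v s y‖₊)
              + ((‖U x y‖₊:ℝ≥0∞) * ((L:ℝ≥0∞) * ‖u s x - v s x‖₊)) := by
          intro y
          rw [nnnorm_mul, ENNReal.coe_mul]
          have h1 : (‖D (u s y - u s x) - D (v s y - v s x)‖₊ : ℝ≥0∞) ≤
              (L:ℝ≥0∞) * ((‖u s y - v s y‖₊ : ℝ≥0∞) + ‖u s x - v s x‖₊) := by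
            refine (hDlip _ _).trans (mul_le_mul_right ?_ _)
            have he : (u s y - u s x) - (v s y - v s x)
                = (u s y - v s y) - (u s x - v s x) := by ring
            rw [he, ← ENNReal.coe_add]
            exact_mod_cast nnnorm_sub_le _ _
          calc (‖U x y‖₊ : ℝ≥0∞) * ‖D (u s y - u s x) - D (v s y - v s x)‖₊
              ≤ (‖U x y‖₊ : ℝ≥0∞) *
                  ((L:ℝ≥0∞) * ((‖u s y - v s y‖₊:ℝ≥0∞) + ‖u s x - v s x‖₊)) :=
                mul_le_mul_right h1 _
            _ = (L:ℝ≥0∞) * ((‖U x y‖₊:ℝ≥0∞) * ‖u s y - v s y‖₊)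
                + (‖U x y‖₊:ℝ≥0∞) * ((L:ℝ≥0∞) * ‖u s x - v s x‖₊) := by ring
        calc ∫⁻ y, (‖U x y * (D (u s y - u s x) - D (v s y - v s x))‖₊ : ℝ≥0∞) ∂mu01
            ≤ ∫⁻ y, ((L:ℝ≥0∞) * ((‖U x y‖₊:ℝ≥0∞) * ‖u s y - v s y‖₊)
                + ((‖U x y‖₊:ℝ≥0∞) * ((L:ℝ≥0∞) * ‖u s x - v s x‖₊))) ∂mu01 :=
              lintegral_mono fun y => hptw y
          _ = (L:ℝ≥0∞) * (∫⁻ y, (‖U x y‖₊:ℝ≥0∞) * ‖u s y - v s y‖₊ ∂mu01)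
                + (∫⁻ y, (‖U x y‖₊:ℝ≥0∞) ∂mu01) * ((L:ℝ≥0∞) * ‖u s x - v s x‖₊) := by
              rw [lintegral_add_left', lintegral_const_mul' _ _ hLtop,
                lintegral_mul_const' _ _ (ENNReal.mul_ne_top hLtop ENNReal.coe_ne_top)]
              exact (hUx.enorm.mul hds_m.enorm).const_mul _
          _ ≤ (L:ℝ≥0∞) * (A x * cs) + 1 * ((L:ℝ≥0∞) * ‖u s x - v s x‖₊) := by
              refine add_le_add (mul_le_mul_right ?_ _) (mul_le_mul_left hU1.2.le _)
              have hhold := ENNReal.lintegral_mul_le_Lp_mul_Lq mu01 hpr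
                hUx.enorm hds_m.enorm
              simp only [enorm_eq_nnnorm] at hhold
              refine hhold.trans ?_
              have hAx' : (∫⁻ y, (‖U x y‖₊ : ℝ≥0∞) ^ p ∂mu01) ^ (1/p) = A x := rfl
              rw [hAx', ← hcs_def]
          _ = ((L:ℝ≥0∞) * cs) * A x + (L:ℝ≥0∞) * ‖u s x - v s x‖₊ := by ring
      calc (‖G (s, x)‖₊ : ℝ≥0∞)
          ≤ (‖(∫ y, U x y * (D (u s y - u s x) - D (v s y - v s x)) ∂mu01)‖₊ : ℝ≥0∞)
            + (‖f (u s x) - f (v s x)‖₊ : ℝ≥0∞) := by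
            rw [← ENNReal.coe_add]
            exact_mod_cast nnnorm_add_le _ _
        _ ≤ (((L:ℝ≥0∞) * cs) * A x + (L:ℝ≥0∞) * ‖u s x - v s x‖₊)
            + (L:ℝ≥0∞) * ‖u s x - v s x‖₊ := add_le_add hIpart hfpart
        _ = ((L:ℝ≥0∞) * cs) * A x + (2 * (L:ℝ≥0∞)) * ‖u s x - v s x‖₊ := by ring
    suffices hsuff : (∫⁻ x, (‖G (s,x)‖₊:ℝ≥0∞) ^ r ∂mu01) ^ (1/r) ≤ (L:ℝ≥0∞) * (N + 2) * S by
      have h := ENNReal.rpow_le_rpow hsuff hr0.le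
      rwa [← ENNReal.rpow_mul, one_div_mul_cancel hr0.ne', ENNReal.rpow_one] at h
    have hm1 : AEMeasurable (fun x => ((L:ℝ≥0∞) * cs) * A x) mu01 := hA_meas.const_mul _
    have hm2 : AEMeasurable (fun x => (2 * (L:ℝ≥0∞)) * (‖u s x - v s x‖₊:ℝ≥0∞)) mu01 :=
      hds_m.enorm.const_mul _
    calc (∫⁻ x, (‖G (s,x)‖₊:ℝ≥0∞) ^ r ∂mu01) ^ (1/r)
        ≤ (∫⁻ x, (((L:ℝ≥0∞)*cs)*A x + (2*(L:ℝ≥0∞))*(‖u s x - v s x‖₊:ℝ≥0∞)) ^ r ∂mu01)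
            ^ (1/r) := by
          refine ENNReal.rpow_le_rpow (lintegral_mono_ae ?_) (by positivity)
          filter_upwards [hptwise] with x hx
          exact ENNReal.rpow_le_rpow hx hr0.le
      _ ≤ (∫⁻ x, (((L:ℝ≥0∞)*cs)*A x) ^ r ∂mu01)^(1/r)
            + (∫⁻ x, ((2*(L:ℝ≥0∞))*(‖u s x - v s x‖₊:ℝ≥0∞)) ^ r ∂mu01)^(1/r) :=
          ENNReal.lintegral_Lp_add_le hm1 hm2 hr1.le
      _ = ((L:ℝ≥0∞)*cs) * (∫⁻ x, A x ^ r ∂mu01)^(1/r) + (2*(L:ℝ≥0∞)) * cs := by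
          rw [lp_smul (ENNReal.mul_ne_top hLtop hcs_top) _ hr0,
            lp_smul (ENNReal.mul_ne_top (by norm_num) hLtop) _ hr0, ← hcs_def]
      _ ≤ ((L:ℝ≥0∞)*cs) * N + (2*(L:ℝ≥0∞)) * cs :=
          add_le_add_left (mul_le_mul_right hA_q _) _
      _ = (L:ℝ≥0∞) * (N + 2) * cs := by ring
      _ ≤ (L:ℝ≥0∞) * (N + 2) * S := mul_le_mul_right hcsS _
  ------------------------------------------------------------------ main per-time bound
  have main : ∀ t ∈ Icc (0:ℝ) τ,
      eLpNorm (fun x => picard U D f g u t x - picard U D f g v t x) (qExp p) mu01 ≤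
        (L:ℝ≥0∞) * ENNReal.ofReal t * ((N + 2) * S) := by
    intro t ht
    have hsub : Ioc (0:ℝ) t ⊆ Icc 0 τ := fun s hs => ⟨hs.1.le, hs.2.trans ht.2⟩
    have hνt : volume.restrict (Ioc (0:ℝ) t) = ν.restrict (Ioc 0 t) := by
      rw [hν_def, Measure.restrict_restrict_of_subset hsub]
    have hνtuniv : volume (Ioc (0:ℝ) t) = ENNReal.ofReal t := by
      rw [Real.volume_Ioc, sub_zero]
    have hAu_b := hAw_bound u huq hSu_top
    have hAv_b := hAw_bound v hvq hSv_top
    have heq : ∀ᵐ x ∂mu01, picard U D f g u t x - picard U D f g v t x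
        = ∫ s in Ioc (0:ℝ) t, G (s, x) ∂volume := by
      filter_upwards [hAux, hAvx, hufin, hvfin, hAu_b, hAv_b, hA_fin] with
        x hx1 hx2 hx3 hx4 hx5 hx6 hx7
      have hfi : ∀ w' : ℝ → ℝ → ℝ,
          (∀ s ∈ Icc (0:ℝ) τ, ∫⁻ y, (‖U x y * D (w' s y - w' s x)‖₊ : ℝ≥0∞) ∂mu01 ≤
            (‖D 0‖₊ : ℝ≥0∞) + (L:ℝ≥0∞) * ‖w' s x‖₊ +
              (L:ℝ≥0∞) * A x * (⨆ t' ∈ Icc (0 : ℝ) τ, eLpNorm (w' t') (qExp p) mu01)) →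
          (⨆ t' ∈ Icc (0 : ℝ) τ, eLpNorm (w' t') (qExp p) mu01) < ∞ →
          (∫⁻ s, (‖w' s x‖₊ : ℝ≥0∞) ∂ν) < ∞ →
          ∀ F : ℝ × ℝ → ℝ, (∀ sx : ℝ × ℝ,
            F sx = (∫ y, U sx.2 y * D (w' sx.1 y - w' sx.1 sx.2) ∂mu01) + f (w' sx.1 sx.2)) →
          AEStronglyMeasurable (fun s => F (s, x)) ν →
          IntegrableOn (fun s => F (s, x)) (Ioc 0 t) volume := by
        intro w' hw5 hSw hw3 F hFdef hwx
        constructor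
        · rw [hνt]; exact hwx.restrict
        · show (∫⁻ s, (‖F (s, x)‖₊:ℝ≥0∞) ∂(volume.restrict (Ioc 0 t))) < ⊤
          have hb : ∀ᵐ s ∂(volume.restrict (Ioc (0:ℝ) t)), (‖F (s, x)‖₊:ℝ≥0∞) ≤
              (((‖D 0‖₊:ℝ≥0∞) + ‖f 0‖₊) + (L:ℝ≥0∞) * A x *
                (⨆ t' ∈ Icc (0 : ℝ) τ, eLpNorm (w' t') (qExp p) mu01))
                + (2*(L:ℝ≥0∞)) * ‖w' s x‖₊ := by
            filter_upwards [ae_restrict_mem measurableSet_Ioc] with s hsmem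
            have hsI : s ∈ Icc (0:ℝ) τ := hsub hsmem
            have hinner := hw5 s hsI
            have hftail : (‖f (w' s x)‖₊:ℝ≥0∞) ≤ (‖f 0‖₊:ℝ≥0∞) + (L:ℝ≥0∞) * ‖w' s x‖₊ := by
              have h := nnnorm_add_le (f (w' s x) - f 0) (f 0)
              rw [sub_add_cancel] at h
              have h2 := hflip (w' s x) 0
              rw [sub_zero] at h2
              calc (‖f (w' s x)‖₊:ℝ≥0∞) ≤ (‖f (w' s x) - f 0‖₊:ℝ≥0∞) + ‖f 0‖₊ := by
                    rw [← ENNReal.coe_add]; exact_mod_cast h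
                _ ≤ (L:ℝ≥0∞) * ‖w' s x‖₊ + ‖f 0‖₊ := add_le_add_left h2 _
                _ = (‖f 0‖₊:ℝ≥0∞) + (L:ℝ≥0∞) * ‖w' s x‖₊ := add_comm _ _
            have hval : (‖F (s, x)‖₊ : ℝ≥0∞) ≤
                (∫⁻ y, (‖U x y * D (w' s y - w' s x)‖₊:ℝ≥0∞) ∂mu01) + ‖f (w' s x)‖₊ := by
              rw [hFdef (s, x)]
              calc (‖(∫ y, U x y * D (w' s y - w' s x) ∂mu01) + f (w' s x)‖₊ : ℝ≥0∞)
                  ≤ (‖(∫ y, U x y * D (w' s y - w' s x) ∂mu01)‖₊ : ℝ≥0∞) + ‖f (w' s x)‖₊ := by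
                    rw [← ENNReal.coe_add]; exact_mod_cast nnnorm_add_le _ _
                _ ≤ _ := add_le_add_left (enorm_integral_le_lintegral_enorm _) _
            refine hval.trans ((add_le_add hinner hftail).trans_eq ?_)
            ring
          calc (∫⁻ s, (‖F (s, x)‖₊:ℝ≥0∞) ∂(volume.restrict (Ioc 0 t)))
              ≤ ∫⁻ s, ((((‖D 0‖₊:ℝ≥0∞) + ‖f 0‖₊) + (L:ℝ≥0∞) * A x *
                  (⨆ t' ∈ Icc (0 : ℝ) τ, eLpNorm (w' t') (qExp p) mu01))
                  + (2*(L:ℝ≥0∞)) * ‖w' s x‖₊) ∂(volume.restrict (Ioc 0 t)) :=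
                lintegral_mono_ae hb
            _ = (((‖D 0‖₊:ℝ≥0∞) + ‖f 0‖₊) + (L:ℝ≥0∞) * A x *
                  (⨆ t' ∈ Icc (0 : ℝ) τ, eLpNorm (w' t') (qExp p) mu01)) * ENNReal.ofReal t
                  + (2*(L:ℝ≥0∞)) * ∫⁻ s, (‖w' s x‖₊:ℝ≥0∞) ∂(volume.restrict (Ioc 0 t)) := by
                rw [lintegral_add_left measurable_const, lintegral_const,
                  lintegral_const_mul' _ _ (ENNReal.mul_ne_top (by norm_num) hLtop),
                  Measure.restrict_apply_univ, hνtuniv]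
            _ < ⊤ := by
                refine ENNReal.add_lt_top.2 ⟨?_, ?_⟩
                · refine ENNReal.mul_lt_top ?_ ENNReal.ofReal_lt_top
                  refine ENNReal.add_lt_top.2 ⟨?_, ?_⟩
                  · exact ENNReal.add_lt_top.2 ⟨ENNReal.coe_lt_top, ENNReal.coe_lt_top⟩
                  · exact ENNReal.mul_lt_top
                      (ENNReal.mul_lt_top ENNReal.coe_lt_top hx7) hSw
                · refine ENNReal.mul_lt_top ?_ ?_
                  · exact ENNReal.mul_lt_top (by norm_num) ENNReal.coe_lt_top
                  · refine lt_of_le_of_lt ?_ hw3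
                    rw [hνt]
                    exact lintegral_mono' Measure.restrict_le_self le_rfl
      have hIntAu : IntegrableOn (fun s => Au (s, x)) (Ioc 0 t) volume :=
        hfi u (fun s hs => (hx5 s hs).2) hSu_top hx3 Au (fun sx => rfl) hx1
      have hIntAv : IntegrableOn (fun s => Av (s, x)) (Ioc 0 t) volume :=
        hfi v (fun s hs => (hx6 s hs).2) hSv_top hx4 Av (fun sx => rfl) hx2
      have hpu : picard U D f g u t x = g x + ∫ s in (0:ℝ)..t, Au (s, x) := rfl
      have hpv : picard U D f g v t x = g x + ∫ s in (0:ℝ)..t, Av (s, x) := rfl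
      rw [hpu, hpv, add_sub_add_left_eq_sub, integral_of_le ht.1, integral_of_le ht.1,
        ← integral_sub hIntAu hIntAv]
      refine integral_congr_ae ?_
      filter_upwards [ae_restrict_mem measurableSet_Ioc] with s hsmem
      have hsI : s ∈ Icc (0:ℝ) τ := hsub hsmem
      have h1 := (hx5 s hsI).1
      have h2 := (hx6 s hsI).1
      show Au (s,x) - Av (s,x) = G (s,x)
      simp only [hAu_def, hAv_def, hG_def]
      rw [add_sub_add_comm, ← integral_sub h1 h2]
      congr 1
      refine integral_congr_ae (Eventually.of_forall fun y => ?_)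
      ring
    have hGm : ∀ᵐ x ∂mu01, AEMeasurable (fun s => (‖G (s, x)‖₊ : ℝ≥0∞))
        (volume.restrict (Ioc (0:ℝ) t)) := by
      filter_upwards [hGx] with x hx
      rw [hνt]; exact hx.restrict.enorm
    have hptw2 : ∀ᵐ x ∂mu01,
        (‖picard U D f g u t x - picard U D f g v t x‖₊ : ℝ≥0∞) ^ r ≤
        (∫⁻ s, (‖G (s, x)‖₊:ℝ≥0∞) ^ r ∂(volume.restrict (Ioc (0:ℝ) t)))
          * (ENNReal.ofReal t) ^ (r/p) := by
      filter_upwards [heq, hGm] with x hx hxm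
      have h1 : (‖picard U D f g u t x - picard U D f g v t x‖₊ : ℝ≥0∞) ≤
          ∫⁻ s, (‖G (s, x)‖₊:ℝ≥0∞) ∂(volume.restrict (Ioc (0:ℝ) t)) := by
        rw [hx]; exact enorm_integral_le_lintegral_enorm _
      have h2 := ENNReal.lintegral_mul_le_Lp_mul_Lq (volume.restrict (Ioc (0:ℝ) t)) hrp
        hxm (aemeasurable_const (b := (1:ℝ≥0∞)))
      simp only [Pi.mul_apply, mul_one, ENNReal.one_rpow, lintegral_one,
        Measure.restrict_apply_univ, hνtuniv] at h2
      calc (‖picard U D f g u t x - picard U D f g v t x‖₊ : ℝ≥0∞) ^ r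
          ≤ ((∫⁻ s, (‖G (s, x)‖₊:ℝ≥0∞) ^ r ∂(volume.restrict (Ioc (0:ℝ) t))) ^ (1/r)
              * (ENNReal.ofReal t) ^ (1/p)) ^ r :=
            ENNReal.rpow_le_rpow (h1.trans h2) hr0.le
        _ = _ := by
            rw [ENNReal.mul_rpow_of_nonneg _ _ hr0.le, ← ENNReal.rpow_mul,
              ← ENNReal.rpow_mul, one_div_mul_cancel hr0.ne', ENNReal.rpow_one]
            congr 2
            ring
    have hjointG2 : AEMeasurable (fun z : ℝ × ℝ => (‖G (z.2, z.1)‖₊ : ℝ≥0∞) ^ r)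
        (mu01.prod (volume.restrict (Ioc (0:ℝ) t))) := by
      have h1 : AEStronglyMeasurable (fun z : ℝ × ℝ => G (z.2, z.1)) (mu01.prod ν) :=
        hjointG.comp_quasiMeasurePreserving
          Measure.measurePreserving_swap.quasiMeasurePreserving
      have h2 : mu01.prod (volume.restrict (Ioc (0:ℝ) t))
          = (mu01.prod ν).restrict (univ ×ˢ Ioc 0 t) := by
        rw [hνt, ← Measure.prod_restrict, Measure.restrict_univ]
      rw [h2]
      exact h1.restrict.enorm.pow_const r
    have hfinal : ∫⁻ x, (‖picard U D f g u t x - picard U D f g v t x‖₊:ℝ≥0∞) ^ r ∂mu01 ≤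
        ((L:ℝ≥0∞) * (N + 2) * S) ^ r * (ENNReal.ofReal t) ^ (1 + r/p) := by
      calc ∫⁻ x, (‖picard U D f g u t x - picard U D f g v t x‖₊:ℝ≥0∞) ^ r ∂mu01
          ≤ ∫⁻ x, (∫⁻ s, (‖G (s, x)‖₊:ℝ≥0∞) ^ r ∂(volume.restrict (Ioc (0:ℝ) t)))
              * (ENNReal.ofReal t) ^ (r/p) ∂mu01 := lintegral_mono_ae hptw2
        _ = (∫⁻ x, ∫⁻ s, (‖G (s, x)‖₊:ℝ≥0∞) ^ r ∂(volume.restrict (Ioc (0:ℝ) t)) ∂mu01)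
              * (ENNReal.ofReal t) ^ (r/p) :=
            lintegral_mul_const' _ _
              (ENNReal.rpow_ne_top_of_nonneg (by positivity) ENNReal.ofReal_ne_top)
        _ = (∫⁻ s, ∫⁻ x, (‖G (s, x)‖₊:ℝ≥0∞) ^ r ∂mu01 ∂(volume.restrict (Ioc (0:ℝ) t)))
              * (ENNReal.ofReal t) ^ (r/p) := by
            rw [lintegral_lintegral_swap hjointG2]
        _ ≤ (((L:ℝ≥0∞) * (N + 2) * S) ^ r * ENNReal.ofReal t)
              * (ENNReal.ofReal t) ^ (r/p) := by
            refine mul_le_mul_left ?_ _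
            calc ∫⁻ s, ∫⁻ x, (‖G (s, x)‖₊:ℝ≥0∞) ^ r ∂mu01 ∂(volume.restrict (Ioc (0:ℝ) t))
                ≤ ∫⁻ _, ((L:ℝ≥0∞) * (N + 2) * S) ^ r ∂(volume.restrict (Ioc (0:ℝ) t)) := by
                  refine lintegral_mono_ae ?_
                  filter_upwards [ae_restrict_mem measurableSet_Ioc] with s hsmem
                  exact key s (hsub hsmem)
              _ = _ := by rw [lintegral_const, Measure.restrict_apply_univ, hνtuniv]
        _ = _ := by
            rw [ENNReal.rpow_add_of_nonneg _ _ zero_le_one (by positivity), ENNReal.rpow_one]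
            ring
    have hexp : 1 + r/p = r := by
      have h := Real.HolderConjugate.inv_add_inv_eq_one hpr
      have h2 : r * p⁻¹ + r * r⁻¹ = r := by rw [← mul_add, h, mul_one]
      rw [mul_inv_cancel₀ hr0.ne', ← div_eq_mul_inv] at h2
      linarith
    calc eLpNorm (fun x => picard U D f g u t x - picard U D f g v t x) (qExp p) mu01
        = (∫⁻ x, (‖picard U D f g u t x - picard U D f g v t x‖₊:ℝ≥0∞) ^ r ∂mu01)
            ^ (1/r) := elp _
      _ ≤ (((L:ℝ≥0∞) * (N + 2) * S) ^ r * (ENNReal.ofReal t) ^ (1 + r/p)) ^ (1/r) :=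
          ENNReal.rpow_le_rpow hfinal (by positivity)
      _ = (L:ℝ≥0∞) * ENNReal.ofReal t * ((N + 2) * S) := by
          rw [hexp, ← ENNReal.mul_rpow_of_nonneg _ _ hr0.le, ← ENNReal.rpow_mul,
            mul_one_div_cancel hr0.ne', ENNReal.rpow_one]
          ring
  ------------------------------------------------------------------ conclusion
  have part1 : (⨆ t ∈ Icc (0:ℝ) τ,
      eLpNorm (fun x => picard U D f g u t x - picard U D f g v t x) (qExp p) mu01)
      ≤ ENNReal.ofReal ((L:ℝ) * τ) * (N + 2) * S := by
    refine iSup₂_le fun t ht => (main t ht).trans ?_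
    rw [ENNReal.ofReal_mul L.coe_nonneg, ENNReal.ofReal_coe_nnreal]
    calc (L:ℝ≥0∞) * ENNReal.ofReal t * ((N+2)*S)
        ≤ (L:ℝ≥0∞) * ENNReal.ofReal τ * ((N+2)*S) :=
          mul_le_mul_left (mul_le_mul_right (ENNReal.ofReal_le_ofReal ht.2) _) _
      _ = (L:ℝ≥0∞) * ENNReal.ofReal τ * (N+2) * S := by ring
  constructor
  · rw [hLmax]
    exact part1
  · intro hτeq
    rw [hLmax] at hτeq
    rcases eq_or_ne (L:ℝ≥0∞) 0 with hL0 | hL0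
    · have hzero : ENNReal.ofReal ((L:ℝ)*τ) * (N+2) * S = 0 := by
        have hL0' : (L:ℝ) = 0 := by exact_mod_cast hL0
        simp [hL0']
      exact le_trans (part1.trans_eq hzero) (by positivity)
    · have hLpos : (0:ℝ) < (L:ℝ) := by
        rcases eq_or_lt_of_le (NNReal.coe_nonneg L) with h | h
        · exact absurd (by exact_mod_cast h.symm : L = 0) (by simpa using hL0)
        · exact h
      have hM0 : (L:ℝ≥0∞) * (N + 2) ≠ 0 := by
        refine mul_ne_zero hL0 (ne_of_gt ?_)
        exact lt_of_lt_of_le (by norm_num : (0:ℝ≥0∞) < 2) le_add_self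
      have hMtop : (L:ℝ≥0∞) * (N + 2) ≠ ∞ :=
        ENNReal.mul_ne_top hLtop (ENNReal.add_ne_top.2 ⟨hNfin, by norm_num⟩)
      have hconst : ENNReal.ofReal ((L:ℝ) * τ) * (N + 2) = 2⁻¹ := by
        rw [hτeq, ENNReal.ofReal_mul L.coe_nonneg, ENNReal.ofReal_coe_nnreal]
        have hpos : 0 < 2 * (L:ℝ) * (N.toReal + 2) := by positivity
        rw [ENNReal.ofReal_inv_of_pos hpos]
        have h2 : ENNReal.ofReal (2 * (L:ℝ) * (N.toReal + 2))
            = 2 * ((L:ℝ≥0∞) * (N + 2)) := by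
          rw [ENNReal.ofReal_mul (by positivity), ENNReal.ofReal_mul (by norm_num),
            ENNReal.ofReal_ofNat, ENNReal.ofReal_coe_nnreal,
            ENNReal.ofReal_add ENNReal.toReal_nonneg (by norm_num),
            ENNReal.ofReal_toReal hNfin, ENNReal.ofReal_ofNat]
          ring
        rw [h2, ENNReal.mul_inv (Or.inl (by norm_num)) (Or.inl ENNReal.ofNat_ne_top)]
        calc (L:ℝ≥0∞) * (2⁻¹ * ((L:ℝ≥0∞)*(N+2))⁻¹) * (N+2)
            = 2⁻¹ * (((L:ℝ≥0∞)*(N+2)) * ((L:ℝ≥0∞)*(N+2))⁻¹) := by ring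
          _ = 2⁻¹ := by rw [ENNReal.mul_inv_cancel hM0 hMtop, mul_one]
      calc (⨆ t ∈ Icc (0:ℝ) τ,
          eLpNorm (fun x => picard U D f g u t x - picard U D f g v t x) (qExp p) mu01)
          ≤ ENNReal.ofReal ((L:ℝ) * τ) * (N + 2) * S := part1
        _ = 2⁻¹ * S := by rw [hconst]
end

section
/- Let W ∈ L²(I²) be nonnegative and symmetric with G(x) := ∫_I W(x,z) dz ≥ ν > 0 for a.e. x ∈ I, set U(x,y) = W(x,y)/G(x), and let f : ℝ → ℝ be Lipschitz continuous. Suppose u, w : [0,T] → L²(I) are two differentiable curves, each taking values in L^∞(I) with sup_{t∈[0,T]} ‖·‖_{L^∞} finite, both satisfying u′(t) = ∫_I U(·,y)(u(y,t) − u(·,t)) dy + f(u(·,t)) in L²(I) for a.e. t ∈ [0,T]. If u(0) = w(0), then u(t) = w(t) for all t ∈ [0,T]. -/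
open MeasureTheory Set Filter
open scoped ENNReal NNReal RealInnerProductSpace

instance inst_s14 : IsProbabilityMeasure mu01 := by
  constructor
  rw [mu01, Measure.restrict_apply_univ, Real.volume_Icc]
  norm_num

theorem key_bound (W : ℝ → ℝ → ℝ) (ν : ℝ) (hν : 0 < ν)
    (hW2 : MemLp (fun z : ℝ × ℝ => W z.1 z.2) 2 mu2)
    (hG : ∀ᵐ x ∂mu01, ν ≤ ∫ z, W x z ∂mu01)
    (Lf : NNReal) (f : ℝ → ℝ) (hf : LipschitzWith Lf f)
    (φ ψ d : Lp ℝ 2 mu01)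
    (hdφ : (d : ℝ → ℝ) =ᵐ[mu01] fun x =>
      ((∫ y, (W x y / ∫ z, W x z ∂mu01) * ((φ : ℝ → ℝ) y - (φ : ℝ → ℝ) x) ∂mu01)
          + f ((φ : ℝ → ℝ) x))
        - ((∫ y, (W x y / ∫ z, W x z ∂mu01) * ((ψ : ℝ → ℝ) y - (ψ : ℝ → ℝ) x) ∂mu01)
          + f ((ψ : ℝ → ℝ) x))) :
    ‖d‖ ≤ ((eLpNorm (fun z : ℝ × ℝ => W z.1 z.2) 2 mu2 / ENNReal.ofReal ν).toReal + 1 + Lf)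
      * ‖φ - ψ‖ := by
  classical
  set G : ℝ → ℝ := fun x => ∫ z, W x z ∂mu01 with hGdef
  set Uk : ℝ → ℝ → ℝ := fun x y => W x y / G x with hUkdef
  set vf : ℝ → ℝ := fun x => (φ : ℝ → ℝ) x - (ψ : ℝ → ℝ) x with hvfdef
  -- a.e. section measurability
  have hWeq : ∀ᵐ x ∂mu01, ∀ᵐ y ∂mu01, W x y = hW2.1.mk _ (x, y) :=
    Measure.ae_ae_of_ae_prod (show _ =ᵐ[mu01.prod mu01] _ from hW2.1.ae_eq_mk)
  have hsect : ∀ᵐ x ∂mu01, AEStronglyMeasurable (fun y => W x y) mu01 := by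
    filter_upwards [hWeq] with x hx
    exact (hW2.1.stronglyMeasurable_mk.comp_measurable
      measurable_prodMk_left).aestronglyMeasurable.congr
      (hx.mono fun y hy => hy.symm)
  -- a.e. finiteness of section square integrals
  have hint2 : ∫⁻ z, ((‖W z.1 z.2‖₊ : ℝ≥0∞)) ^ (2:ℝ) ∂mu2 < ⊤ := by
    have h := hW2.2
    rw [eLpNorm_eq_lintegral_rpow_enorm_toReal two_ne_zero ENNReal.ofNat_ne_top] at h
    simp only [ENNReal.toReal_ofNat] at h
    rw [← ENNReal.rpow_lt_top_iff_of_pos (by norm_num : (0:ℝ) < 1/2)]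
    exact h
  have hmeas2 : AEMeasurable (fun z : ℝ × ℝ => ((‖W z.1 z.2‖₊ : ℝ≥0∞)) ^ (2:ℝ)) mu2 :=
    hW2.1.aemeasurable.enorm.pow_const _
  have hprod : ∫⁻ z, ((‖W z.1 z.2‖₊ : ℝ≥0∞)) ^ (2:ℝ) ∂mu2
      = ∫⁻ x, ∫⁻ y, ((‖W x y‖₊ : ℝ≥0∞)) ^ (2:ℝ) ∂mu01 ∂mu01 :=
    MeasureTheory.lintegral_prod _ hmeas2
  have hsecfin : ∀ᵐ x ∂mu01, ∫⁻ y, ((‖W x y‖₊ : ℝ≥0∞)) ^ (2:ℝ) ∂mu01 < ⊤ := by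
    set Wm := hW2.1.mk _ with hWmdef
    have hWmm : Measurable fun z : ℝ × ℝ => ((‖Wm z‖₊ : ℝ≥0∞)) ^ (2:ℝ) :=
      (hW2.1.stronglyMeasurable_mk.measurable.nnnorm.coe_nnreal_ennreal).pow_const _
    have h1 : ∫⁻ z, ((‖Wm z‖₊ : ℝ≥0∞)) ^ (2:ℝ) ∂mu2 < ⊤ := by
      have heq : ∫⁻ z, ((‖Wm z‖₊ : ℝ≥0∞)) ^ (2:ℝ) ∂mu2
          = ∫⁻ z, ((‖W z.1 z.2‖₊ : ℝ≥0∞)) ^ (2:ℝ) ∂mu2 :=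
        lintegral_congr_ae (hW2.1.ae_eq_mk.mono fun z hz => by have hz' : W z.1 z.2 = Wm z := hz; dsimp only; rw [hz'])
      rw [heq]; exact hint2
    rw [show mu2 = mu01.prod mu01 from rfl,
      MeasureTheory.lintegral_prod _ hWmm.aemeasurable] at h1
    have h2 := ae_lt_top (Measurable.lintegral_prod_right' hWmm) h1.ne
    filter_upwards [h2, hWeq] with x hx1 hx2
    have : ∫⁻ y, ((‖W x y‖₊ : ℝ≥0∞)) ^ (2:ℝ) ∂mu01
        = ∫⁻ y, ((‖Wm (x, y)‖₊ : ℝ≥0∞)) ^ (2:ℝ) ∂mu01 :=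
      lintegral_congr_ae (hx2.mono fun y hy => by dsimp only; rw [hy])
    rw [this]; exact hx1
  have hgood : ∀ᵐ x ∂mu01, MemLp (fun y => W x y) 2 mu01 ∧ ν ≤ G x := by
    filter_upwards [hsect, hsecfin, hG] with x h1 h2 h3
    refine ⟨⟨h1, ?_⟩, h3⟩
    rw [eLpNorm_eq_lintegral_rpow_enorm_toReal two_ne_zero ENNReal.ofNat_ne_top]
    simp only [ENNReal.toReal_ofNat]
    exact ENNReal.rpow_lt_top_of_nonneg (by norm_num) h2.ne
  -- the pointwise identity
  have hφ2 : MemLp (⇑φ) 2 mu01 := Lp.memLp φ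
  have hψ2 : MemLp (⇑ψ) 2 mu01 := Lp.memLp ψ
  have hvf2 : MemLp vf 2 mu01 := hφ2.sub hψ2
  have hone : (1:ℝ≥0∞)/1 = 1/2 + 1/2 := by
    rw [ENNReal.add_halves]; simp
  have hkey : (d : ℝ → ℝ) =ᵐ[mu01] fun x =>
      (∫ y, Uk x y * vf y ∂mu01) - vf x + (f ((φ : ℝ → ℝ) x) - f ((ψ : ℝ → ℝ) x)) := by
    filter_upwards [hdφ, hgood] with x hdx hx
    obtain ⟨hx2, hxG⟩ := hx
    have hGpos : 0 < G x := lt_of_lt_of_le hν hxG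
    have hUk2 : MemLp (fun y => Uk x y) 2 mu01 := by
      have h := hx2.const_mul (G x)⁻¹
      have he : (fun y => (G x)⁻¹ * W x y) = fun y => Uk x y := by
        funext y; simp only [hUkdef]; rw [div_eq_inv_mul]
      rwa [he] at h
    have hUkInt : Integrable (fun y => Uk x y) mu01 := hUk2.integrable one_le_two
    have hprodInt : ∀ g : ℝ → ℝ, MemLp g 2 mu01 →
        Integrable (fun y => Uk x y * g y) mu01 := by
      intro g hg
      have h : MemLp ((fun y => Uk x y) • g) 1 mu01 := hg.smul hUk2
      exact memLp_one_iff_integrable.mp (by exact h)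
    have hintUk1 : ∫ y, Uk x y ∂mu01 = 1 := by
      simp only [hUkdef]
      rw [integral_div]
      exact div_self hGpos.ne'
    have hsplit : ∀ g : ℝ → ℝ, MemLp g 2 mu01 →
        ∫ y, Uk x y * (g y - g x) ∂mu01 = (∫ y, Uk x y * g y ∂mu01) - g x := by
      intro g hg
      have he : (fun y => Uk x y * (g y - g x)) = fun y => Uk x y * g y - Uk x y * g x := by
        funext y; ring
      rw [he, integral_sub (hprodInt g hg) (hUkInt.mul_const _), integral_mul_const,
        hintUk1, one_mul]
    have hdiff : ∫ y, Uk x y * vf y ∂mu01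
        = (∫ y, Uk x y * (φ : ℝ → ℝ) y ∂mu01) - ∫ y, Uk x y * (ψ : ℝ → ℝ) y ∂mu01 := by
      rw [← integral_sub (hprodInt _ hφ2) (hprodInt _ hψ2)]
      congr 1; funext y; simp only [hvfdef]; ring
    have h1 := hsplit _ hφ2
    have h2 := hsplit _ hψ2
    have hdx' : (d : ℝ → ℝ) x =
        ((∫ y, Uk x y * ((φ : ℝ → ℝ) y - (φ : ℝ → ℝ) x) ∂mu01) + f ((φ : ℝ → ℝ) x))
        - ((∫ y, Uk x y * ((ψ : ℝ → ℝ) y - (ψ : ℝ → ℝ) x) ∂mu01) + f ((ψ : ℝ → ℝ) x)) := hdx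
    rw [hdx', h1, h2, hdiff]
    simp only [hvfdef]
    ring
  -- norms
  set νE := ENNReal.ofReal ν with hνEdef
  set CW := eLpNorm (fun z : ℝ × ℝ => W z.1 z.2) 2 mu2 with hCWdef
  have hνE0 : νE ≠ 0 := ne_of_gt (ENNReal.ofReal_pos.mpr hν)
  have hνEtop : νE ≠ ⊤ := ENNReal.ofReal_ne_top
  have hνEitop : νE⁻¹ ≠ ⊤ := by simp [hνE0]
  have hCWtop : CW ≠ ⊤ := hW2.2.ne
  set N := eLpNorm vf 2 mu01 with hNdef
  have hNeq : eLpNorm (⇑(φ - ψ)) 2 mu01 = N :=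
    eLpNorm_congr_ae (Lp.coeFn_sub φ ψ)
  have hNtop : N ≠ ⊤ := by rw [← hNeq]; exact Lp.eLpNorm_ne_top _
  set A : ℝ → ℝ := fun x => ∫ y, Uk x y * vf y ∂mu01 with hAdef
  set B : ℝ → ℝ := fun x => f ((φ : ℝ → ℝ) x) - f ((ψ : ℝ → ℝ) x) with hBdef
  have hvmeas : AEStronglyMeasurable vf mu01 :=
    (Lp.aestronglyMeasurable φ).sub (Lp.aestronglyMeasurable ψ)
  have hBmeas : AEStronglyMeasurable B mu01 :=
    (hf.continuous.comp_aestronglyMeasurable (Lp.aestronglyMeasurable φ)).sub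
      (hf.continuous.comp_aestronglyMeasurable (Lp.aestronglyMeasurable ψ))
  have hAmeas : AEStronglyMeasurable A mu01 := by
    have he : A =ᵐ[mu01] fun x => ((d : ℝ → ℝ) x + vf x) - B x := by
      filter_upwards [hkey] with x hx
      have : (d : ℝ → ℝ) x = A x - vf x + B x := hx
      simp only [hAdef]
      linarith [this]
    exact (((Lp.aestronglyMeasurable d).add hvmeas).sub hBmeas).congr he.symm
  have hhalf : ∀ X : ℝ≥0∞, (X ^ (1/2 : ℝ)) ^ (2:ℝ) = X := by
    intro X; rw [← ENNReal.rpow_mul]; norm_num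
  have hhalf' : ∀ X : ℝ≥0∞, (X ^ (2 : ℝ)) ^ (1/2:ℝ) = X := by
    intro X; rw [← ENNReal.rpow_mul]; norm_num
  have hN2 : ∫⁻ y, ((‖vf y‖₊ : ℝ≥0∞)) ^ (2:ℝ) ∂mu01 = N ^ (2:ℝ) := by
    rw [hNdef, eLpNorm_eq_lintegral_rpow_enorm_toReal two_ne_zero ENNReal.ofNat_ne_top]
    simp only [ENNReal.toReal_ofNat]
    rw [hhalf]; rfl
  -- bound on A
  have hA : eLpNorm A 2 mu01 ≤ CW / νE * N := by
    have h22 : Real.HolderConjugate 2 2 := Real.holderConjugate_iff.mpr ⟨one_lt_two, by norm_num⟩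
    have hpt : ∀ᵐ x ∂mu01, ((‖A x‖₊ : ℝ≥0∞)) ^ (2:ℝ)
        ≤ νE⁻¹ ^ (2:ℝ) * (∫⁻ y, ((‖W x y‖₊ : ℝ≥0∞)) ^ (2:ℝ) ∂mu01) * N ^ (2:ℝ) := by
      filter_upwards [hgood, hsect] with x hx hxs
      obtain ⟨hx2, hxG⟩ := hx
      have hGpos : 0 < G x := lt_of_lt_of_le hν hxG
      have hUmeas : AEMeasurable (fun y => ((‖Uk x y‖₊ : ℝ≥0∞))) mu01 := by
        have : AEMeasurable (fun y => Uk x y) mu01 := by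
          have := hxs.aemeasurable.div_const (G x)
          simpa [hUkdef] using this
        exact this.enorm
      have hvmeas' : AEMeasurable (fun y => ((‖vf y‖₊ : ℝ≥0∞))) mu01 :=
        hvmeas.aemeasurable.enorm
      have h1 : ((‖A x‖₊ : ℝ≥0∞)) ≤
          ∫⁻ y, ((‖Uk x y‖₊ : ℝ≥0∞)) * ((‖vf y‖₊ : ℝ≥0∞)) ∂mu01 := by
        refine le_trans (enorm_integral_le_lintegral_enorm _) ?_
        refine le_of_eq (lintegral_congr fun y => ?_)
        rw [show ‖Uk x y * vf y‖ₑ = ((‖Uk x y * vf y‖₊ : ℝ≥0∞)) from rfl, nnnorm_mul, ENNReal.coe_mul]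
      have h2 := ENNReal.lintegral_mul_le_Lp_mul_Lq mu01 h22 hUmeas hvmeas'
      have hU2 : ∫⁻ y, ((‖Uk x y‖₊ : ℝ≥0∞)) ^ (2:ℝ) ∂mu01
          ≤ νE⁻¹ ^ (2:ℝ) * ∫⁻ y, ((‖W x y‖₊ : ℝ≥0∞)) ^ (2:ℝ) ∂mu01 := by
        rw [← lintegral_const_mul' _ _ (by simp [hνE0] : νE⁻¹ ^ (2:ℝ) ≠ ⊤)]
        refine lintegral_mono fun y => ?_
        have hptv : ((‖Uk x y‖₊ : ℝ≥0∞)) ≤ νE⁻¹ * ((‖W x y‖₊ : ℝ≥0∞)) := by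
          have habs : |Uk x y| ≤ ν⁻¹ * |W x y| := by
            simp only [hUkdef]
            rw [abs_div, abs_of_pos hGpos, div_eq_inv_mul]
            exact mul_le_mul_of_nonneg_right
              (by exact inv_anti₀ hν hxG) (abs_nonneg _)
          calc ((‖Uk x y‖₊ : ℝ≥0∞)) = ENNReal.ofReal |Uk x y| := by
                rw [← Real.enorm_eq_ofReal_abs]; rfl
            _ ≤ ENNReal.ofReal (ν⁻¹ * |W x y|) := ENNReal.ofReal_le_ofReal habs
            _ = ENNReal.ofReal ν⁻¹ * ENNReal.ofReal |W x y| :=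
                ENNReal.ofReal_mul (by positivity)
            _ = νE⁻¹ * ((‖W x y‖₊ : ℝ≥0∞)) := by
                rw [ENNReal.ofReal_inv_of_pos hν, ← Real.enorm_eq_ofReal_abs, hνEdef]; rfl
        calc ((‖Uk x y‖₊ : ℝ≥0∞)) ^ (2:ℝ) ≤ (νE⁻¹ * ((‖W x y‖₊ : ℝ≥0∞))) ^ (2:ℝ) :=
              ENNReal.rpow_le_rpow hptv (by norm_num)
          _ = νE⁻¹ ^ (2:ℝ) * ((‖W x y‖₊ : ℝ≥0∞)) ^ (2:ℝ) :=
              ENNReal.mul_rpow_of_nonneg _ _ (by norm_num)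
      calc ((‖A x‖₊ : ℝ≥0∞)) ^ (2:ℝ)
          ≤ ((∫⁻ y, ((‖Uk x y‖₊ : ℝ≥0∞)) ^ (2:ℝ) ∂mu01) ^ (1/2:ℝ)
            * (∫⁻ y, ((‖vf y‖₊ : ℝ≥0∞)) ^ (2:ℝ) ∂mu01) ^ (1/2:ℝ)) ^ (2:ℝ) :=
            ENNReal.rpow_le_rpow (le_trans h1 (by simpa using h2)) (by norm_num)
        _ = (∫⁻ y, ((‖Uk x y‖₊ : ℝ≥0∞)) ^ (2:ℝ) ∂mu01)
            * (∫⁻ y, ((‖vf y‖₊ : ℝ≥0∞)) ^ (2:ℝ) ∂mu01) := by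
            rw [ENNReal.mul_rpow_of_nonneg _ _ (by norm_num : (0:ℝ) ≤ 2), hhalf, hhalf]
        _ ≤ (νE⁻¹ ^ (2:ℝ) * ∫⁻ y, ((‖W x y‖₊ : ℝ≥0∞)) ^ (2:ℝ) ∂mu01) * N ^ (2:ℝ) := by
            rw [hN2]
            exact mul_le_mul_left hU2 _
    -- integrate the pointwise bound
    have hle := lintegral_mono_ae hpt
    have hconst : ∫⁻ x, νE⁻¹ ^ (2:ℝ) * (∫⁻ y, ((‖W x y‖₊ : ℝ≥0∞)) ^ (2:ℝ) ∂mu01)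
          * N ^ (2:ℝ) ∂mu01
        = νE⁻¹ ^ (2:ℝ) * (∫⁻ x, ∫⁻ y, ((‖W x y‖₊ : ℝ≥0∞)) ^ (2:ℝ) ∂mu01 ∂mu01)
          * N ^ (2:ℝ) := by
      rw [lintegral_mul_const' _ _ (by
          exact ENNReal.rpow_ne_top_of_nonneg (by norm_num) hNtop),
        lintegral_const_mul' _ _ (by simp [hνE0] : νE⁻¹ ^ (2:ℝ) ≠ ⊤)]
    have hWint : ∫⁻ x, ∫⁻ y, ((‖W x y‖₊ : ℝ≥0∞)) ^ (2:ℝ) ∂mu01 ∂mu01 = CW ^ (2:ℝ) := by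
      rw [← hprod, hCWdef, eLpNorm_eq_lintegral_rpow_enorm_toReal two_ne_zero ENNReal.ofNat_ne_top]
      simp only [ENNReal.toReal_ofNat]
      rw [hhalf]; rfl
    rw [hconst, hWint] at hle
    rw [eLpNorm_eq_lintegral_rpow_enorm_toReal two_ne_zero ENNReal.ofNat_ne_top]
    simp only [ENNReal.toReal_ofNat]
    calc (∫⁻ x, ((‖A x‖₊ : ℝ≥0∞)) ^ (2:ℝ) ∂mu01) ^ (1/2:ℝ)
        ≤ (νE⁻¹ ^ (2:ℝ) * CW ^ (2:ℝ) * N ^ (2:ℝ)) ^ (1/2:ℝ) :=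
          ENNReal.rpow_le_rpow hle (by norm_num)
      _ = νE⁻¹ * CW * N := by
          rw [ENNReal.mul_rpow_of_nonneg _ _ (by norm_num : (0:ℝ) ≤ 1/2),
            ENNReal.mul_rpow_of_nonneg _ _ (by norm_num : (0:ℝ) ≤ 1/2),
            hhalf', hhalf', hhalf']
      _ = CW / νE * N := by rw [div_eq_mul_inv, mul_comm νE⁻¹ CW]
  -- bound on B
  have hB : eLpNorm B 2 mu01 ≤ (Lf : ℝ≥0∞) * N := by
    have hb : ∀ x, ‖B x‖ ≤ ‖((Lf : ℝ) • vf) x‖ := by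
      intro x
      have := hf.dist_le_mul ((φ : ℝ → ℝ) x) ((ψ : ℝ → ℝ) x)
      rw [Real.dist_eq, Real.dist_eq] at this
      simp only [hBdef, hvfdef, Pi.smul_apply, smul_eq_mul, Real.norm_eq_abs]
      rw [abs_mul, abs_of_nonneg (by positivity : (0:ℝ) ≤ (Lf : ℝ))]
      exact this
    calc eLpNorm B 2 mu01 ≤ eLpNorm ((Lf : ℝ) • vf) 2 mu01 := eLpNorm_mono hb
      _ = (Lf : ℝ≥0∞) * N := by
          rw [eLpNorm_const_smul]
          congr 1
          simp
  -- triangle inequality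
  have htri : eLpNorm (⇑d) 2 mu01 ≤ eLpNorm A 2 mu01 + N + eLpNorm B 2 mu01 := by
    calc eLpNorm (⇑d) 2 mu01
        = eLpNorm ((fun x => A x - vf x) + B) 2 mu01 := by
          refine eLpNorm_congr_ae ?_
          filter_upwards [hkey] with x hx
          simpa [hAdef, hBdef] using hx
      _ ≤ eLpNorm (fun x => A x - vf x) 2 mu01 + eLpNorm B 2 mu01 :=
          eLpNorm_add_le (hAmeas.sub hvmeas) hBmeas one_le_two
      _ ≤ (eLpNorm A 2 mu01 + N) + eLpNorm B 2 mu01 := by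
          exact add_le_add_left (eLpNorm_sub_le hAmeas hvmeas one_le_two) _
  have htot : eLpNorm (⇑d) 2 mu01 ≤ (CW / νE + 1 + (Lf : ℝ≥0∞)) * N := by
    calc eLpNorm (⇑d) 2 mu01 ≤ eLpNorm A 2 mu01 + N + eLpNorm B 2 mu01 := htri
      _ ≤ (CW / νE * N + N) + (Lf : ℝ≥0∞) * N := add_le_add (add_le_add hA le_rfl) hB
      _ = (CW / νE + 1 + (Lf : ℝ≥0∞)) * N := by ring
  -- pass to real numbers
  have hKtop : CW / νE + 1 + (Lf : ℝ≥0∞) ≠ ⊤ := by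
    have h1 : CW / νE ≠ ⊤ := (ENNReal.div_lt_top hCWtop hνE0).ne
    simp [h1, ENNReal.add_ne_top]
  have hrhs : (CW / νE + 1 + (Lf : ℝ≥0∞)) * N ≠ ⊤ := ENNReal.mul_ne_top hKtop hNtop
  have hmono := ENNReal.toReal_mono hrhs htot
  rw [Lp.norm_def, Lp.norm_def, hNeq] at *
  calc (eLpNorm (⇑d) 2 mu01).toReal ≤ ((CW / νE + 1 + (Lf : ℝ≥0∞)) * N).toReal := hmono
    _ = ((CW / νE).toReal + 1 + (Lf : ℝ)) * N.toReal := by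
        rw [ENNReal.toReal_mul]
        congr 1
        rw [ENNReal.toReal_add (by simp [(ENNReal.div_lt_top hCWtop hνE0).ne,
            ENNReal.add_ne_top]) ENNReal.coe_ne_top,
          ENNReal.toReal_add (ENNReal.div_lt_top hCWtop hνE0).ne ENNReal.one_ne_top]
        simp

/-- Uniqueness for the nonlocal equation with kernel
`U(x,y) = W(x,y)/∫_I W(x,z) dz`: if `W ∈ L²(I²)` is nonnegative and symmetric with
row integrals `≥ ν > 0` a.e., `f` is Lipschitz, and `u, w : [0,T] → L²(I)` are two
differentiable curves with uniformly bounded `L^∞` values, both satisfying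
`u'(t) = ∫_I U(·,y)(u(y,t)-u(·,t)) dy + f(u(·,t))` in `L²(I)` for a.e. `t ∈ [0,T]`,
then `u(0) = w(0)` implies `u(t) = w(t)` for all `t ∈ [0,T]`. -/
theorem uniqueness_weak (W : ℝ → ℝ → ℝ) (ν : ℝ) (hν : 0 < ν)
    (hWnn : ∀ᵐ z ∂mu2, 0 ≤ W z.1 z.2)
    (hWsym : ∀ᵐ z ∂mu2, W z.1 z.2 = W z.2 z.1)
    (hW2 : MemLp (fun z : ℝ × ℝ => W z.1 z.2) 2 mu2)
    (hG : ∀ᵐ x ∂mu01, ν ≤ ∫ z, W x z ∂mu01)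
    (Lf : NNReal) (f : ℝ → ℝ) (hf : LipschitzWith Lf f)
    (T : ℝ) (hT : 0 < T)
    (u w : ℝ → Lp ℝ 2 mu01)
    (hubdd : ∃ M : ℝ, ∀ t ∈ Icc (0 : ℝ) T,
      eLpNorm (u t : ℝ → ℝ) ⊤ mu01 ≤ ENNReal.ofReal M)
    (hwbdd : ∃ M : ℝ, ∀ t ∈ Icc (0 : ℝ) T,
      eLpNorm (w t : ℝ → ℝ) ⊤ mu01 ≤ ENNReal.ofReal M)
    (hu : ∃ u' : ℝ → Lp ℝ 2 mu01,
      (∀ t ∈ Icc (0 : ℝ) T, HasDerivAt u (u' t) t) ∧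
      ∀ᵐ t ∂(volume.restrict (Ioc (0 : ℝ) T)),
        (u' t : ℝ → ℝ) =ᵐ[mu01]
          fun x => (∫ y, (W x y / ∫ z, W x z ∂mu01)
              * ((u t : ℝ → ℝ) y - (u t : ℝ → ℝ) x) ∂mu01) + f ((u t : ℝ → ℝ) x))
    (hw : ∃ w' : ℝ → Lp ℝ 2 mu01,
      (∀ t ∈ Icc (0 : ℝ) T, HasDerivAt w (w' t) t) ∧
      ∀ᵐ t ∂(volume.restrict (Ioc (0 : ℝ) T)),
        (w' t : ℝ → ℝ) =ᵐ[mu01]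
          fun x => (∫ y, (W x y / ∫ z, W x z ∂mu01)
              * ((w t : ℝ → ℝ) y - (w t : ℝ → ℝ) x) ∂mu01) + f ((w t : ℝ → ℝ) x))
    (h0 : u 0 = w 0) :
    ∀ t ∈ Icc (0 : ℝ) T, u t = w t := by
  classical
  obtain ⟨u', hu_deriv, hu_eq⟩ := hu
  obtain ⟨w', hw_deriv, hw_eq⟩ := hw
  set K : ℝ := ((eLpNorm (fun z : ℝ × ℝ => W z.1 z.2) 2 mu2 / ENNReal.ofReal ν).toReal
    + 1 + (Lf : ℝ)) with hKdef
  have hK0 : 0 ≤ K := by positivity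
  have hv : ∀ t ∈ Icc (0:ℝ) T, HasDerivAt (fun s => u s - w s) (u' t - w' t) t :=
    fun t ht => (hu_deriv t ht).sub (hw_deriv t ht)
  set h : ℝ → ℝ := fun t => ⟪u t - w t, u t - w t⟫ with hhdef
  have hnormsq : ∀ t, h t = ‖u t - w t‖^2 := fun t => real_inner_self_eq_norm_sq _
  have hderiv : ∀ t ∈ Icc (0:ℝ) T,
      HasDerivAt h (2 * ⟪u' t - w' t, u t - w t⟫) t := by
    intro t ht
    have H := HasDerivAt.inner ℝ (hv t ht) (hv t ht)
    have H2 : ⟪u t - w t, u' t - w' t⟫ + ⟪u' t - w' t, u t - w t⟫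
        = 2 * ⟪u' t - w' t, u t - w t⟫ := by
      rw [real_inner_comm]; ring
    exact H2 ▸ H
  have hpos : ∀ t, 0 ≤ h t := fun t => real_inner_self_nonneg
  have hzero : h 0 = 0 := by simp [hhdef, h0]
  -- a.e. derivative bound
  have hae : ∀ᵐ t ∂(volume.restrict (Ioc (0:ℝ) T)),
      t ∈ Icc (0:ℝ) T ∧ |deriv h t| ≤ 2 * K * h t := by
    filter_upwards [hu_eq, hw_eq, ae_restrict_mem measurableSet_Ioc] with t htu htw htmem
    have htIcc : t ∈ Icc (0:ℝ) T := ⟨le_of_lt htmem.1, htmem.2⟩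
    refine ⟨htIcc, ?_⟩
    have hd : ((u' t - w' t : Lp ℝ 2 mu01) : ℝ → ℝ) =ᵐ[mu01] fun x =>
        ((∫ y, (W x y / ∫ z, W x z ∂mu01)
            * ((u t : ℝ → ℝ) y - (u t : ℝ → ℝ) x) ∂mu01) + f ((u t : ℝ → ℝ) x))
        - ((∫ y, (W x y / ∫ z, W x z ∂mu01)
            * ((w t : ℝ → ℝ) y - (w t : ℝ → ℝ) x) ∂mu01) + f ((w t : ℝ → ℝ) x)) := by
      filter_upwards [Lp.coeFn_sub (u' t) (w' t), htu, htw] with x h1 h2 h3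
      rw [h1, Pi.sub_apply, h2, h3]
    have hbd := key_bound W ν hν hW2 hG Lf f hf (u t) (w t) (u' t - w' t) hd
    rw [(hderiv t htIcc).deriv]
    have hip : |(⟪u' t - w' t, u t - w t⟫ : ℝ)| ≤ K * ‖u t - w t‖ * ‖u t - w t‖ := by
      calc |(⟪u' t - w' t, u t - w t⟫ : ℝ)| ≤ ‖u' t - w' t‖ * ‖u t - w t‖ :=
            abs_real_inner_le_norm _ _
        _ ≤ (K * ‖u t - w t‖) * ‖u t - w t‖ := by
            have hbd' : ‖u' t - w' t‖ ≤ K * ‖u t - w t‖ := by rw [hKdef]; exact hbd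
            exact mul_le_mul_of_nonneg_right hbd' (norm_nonneg _)
        _ = K * ‖u t - w t‖ * ‖u t - w t‖ := by ring
    rw [abs_mul, abs_of_nonneg (by norm_num : (0:ℝ) ≤ 2), hnormsq]
    nlinarith [hip]
  -- continuity of h on Icc
  have hcontAt : ∀ t ∈ Icc (0:ℝ) T, ContinuousAt h t :=
    fun t ht => (hderiv t ht).continuousAt
  have hcontOn : ContinuousOn h (Icc 0 T) :=
    fun t ht => (hcontAt t ht).continuousWithinAt
  -- bound on h over Icc
  obtain ⟨Bd, hBd⟩ : ∃ Bd : ℝ, ∀ t ∈ Icc (0:ℝ) T, h t ≤ Bd := by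
    obtain ⟨Bd, hBd⟩ := (isCompact_Icc.image_of_continuousOn hcontOn).bddAbove
    exact ⟨Bd, fun t ht => hBd ⟨t, ht, rfl⟩⟩
  -- interval integrability of deriv h
  have hmeas_dh : Measurable (deriv h) := measurable_deriv h
  have hInt : ∀ s ∈ Icc (0:ℝ) T, IntervalIntegrable (deriv h) volume 0 s := by
    intro s hs
    rw [intervalIntegrable_iff_integrableOn_Ioc_of_le hs.1]
    refine Integrable.mono' (integrable_const (2*K*Bd))
      hmeas_dh.aestronglyMeasurable.restrict ?_
    have hsub : Ioc (0:ℝ) s ⊆ Ioc 0 T := Ioc_subset_Ioc le_rfl hs.2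
    have h1 := ae_restrict_of_ae_restrict_of_subset hsub hae
    filter_upwards [h1] with t ht
    obtain ⟨htIcc, hbt⟩ := ht
    rw [Real.norm_eq_abs]
    calc |deriv h t| ≤ 2 * K * h t := hbt
      _ ≤ 2 * K * Bd := by
          have := hBd t htIcc
          nlinarith
  -- FTC and Gronwall-type inequality
  set F : ℝ → ℝ := fun s => ∫ τ in (0:ℝ)..s, h τ with hFdef
  have hIntcc : IntegrableOn h (Icc 0 T) volume :=
    hcontOn.integrableOn_compact isCompact_Icc
  have hIntervalh : ∀ s ∈ Icc (0:ℝ) T, IntervalIntegrable h volume 0 s := by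
    intro s hs
    refine (hcontOn.mono ?_).intervalIntegrable
    rw [uIcc_of_le hs.1]
    exact Icc_subset_Icc le_rfl hs.2
  have hFTC2 : ∀ s ∈ Icc (0:ℝ) T, h s ≤ 2 * K * F s := by
    intro s hs
    have heq : ∫ τ in (0:ℝ)..s, deriv h τ = h s - h 0 := by
      refine intervalIntegral.integral_eq_sub_of_hasDerivAt (fun t ht => ?_) (hInt s hs)
      have htIcc : t ∈ Icc (0:ℝ) T := by
        rw [uIcc_of_le hs.1] at ht
        exact ⟨ht.1, le_trans ht.2 hs.2⟩
      have H := hderiv t htIcc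
      exact H.deriv ▸ H
    have hmono : ∫ τ in (0:ℝ)..s, deriv h τ ≤ ∫ τ in (0:ℝ)..s, 2 * K * h τ := by
      rw [intervalIntegral.integral_of_le hs.1, intervalIntegral.integral_of_le hs.1]
      refine setIntegral_mono_ae_restrict
        ((intervalIntegrable_iff_integrableOn_Ioc_of_le hs.1).mp (hInt s hs))
        (((intervalIntegrable_iff_integrableOn_Ioc_of_le hs.1).mp
          (hIntervalh s hs)).const_mul _) ?_
      have hsub : Ioc (0:ℝ) s ⊆ Ioc 0 T := Ioc_subset_Ioc le_rfl hs.2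
      filter_upwards [ae_restrict_of_ae_restrict_of_subset hsub hae] with t ht
      exact le_trans (le_abs_self _) ht.2
    have := heq ▸ hmono
    rw [hzero, sub_zero] at this
    calc h s ≤ ∫ τ in (0:ℝ)..s, 2 * K * h τ := this
      _ = 2 * K * F s := by rw [intervalIntegral.integral_const_mul]
  -- continuity and derivative of F
  have hFcont : ContinuousOn F (Icc 0 T) := by
    have := intervalIntegral.continuousOn_primitive_interval
      (a := (0:ℝ)) (b := T) (μ := volume) (f := h) ?_
    · rwa [uIcc_of_le hT.le] at this
    · rwa [uIcc_of_le hT.le]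
  have hFderiv : ∀ s ∈ Ioo (0:ℝ) T, HasDerivAt F (h s) s := by
    intro s hs
    have hsIcc : s ∈ Icc (0:ℝ) T := ⟨hs.1.le, hs.2.le⟩
    refine intervalIntegral.integral_hasDerivAt_right (hIntervalh s hsIcc) ?_
      (hcontAt s hsIcc)
    exact (hcontOn.mono Ioo_subset_Icc_self).stronglyMeasurableAtFilter
      isOpen_Ioo s hs
  -- the function exp(-2Kt) * F t is antitone
  set ψf : ℝ → ℝ := fun s => Real.exp (-(2*K)*s) * F s with hψdef
  have hecont : Continuous fun s : ℝ => Real.exp (-(2*K)*s) :=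
    Real.continuous_exp.comp (continuous_const.mul continuous_id)
  have hψcont : ContinuousOn ψf (Icc 0 T) := hecont.continuousOn.mul hFcont
  have hψderiv : ∀ s ∈ Ioo (0:ℝ) T,
      HasDerivAt ψf (Real.exp (-(2*K)*s) * (h s - 2*K*F s)) s := by
    intro s hs
    have he1 : HasDerivAt (fun x : ℝ => -(2*K)*x) (-(2*K)) s := by
      simpa using (hasDerivAt_id s).const_mul (-(2*K))
    have he : HasDerivAt (fun x : ℝ => Real.exp (-(2*K)*x))
        (Real.exp (-(2*K)*s) * (-(2*K))) s := he1.exp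
    have := he.mul (hFderiv s hs)
    exact this.congr_deriv (by ring)
  have hanti : AntitoneOn ψf (Icc 0 T) := by
    refine antitoneOn_of_deriv_nonpos (convex_Icc _ _) hψcont ?_ ?_
    · intro s hs
      rw [interior_Icc] at hs
      exact ((hψderiv s hs).differentiableAt).differentiableWithinAt
    · intro s hs
      rw [interior_Icc] at hs
      rw [(hψderiv s hs).deriv]
      have h1 := hFTC2 s ⟨hs.1.le, hs.2.le⟩
      have h2 : h s - 2*K*F s ≤ 0 := by linarith
      have hexp := (Real.exp_pos (-(2*K)*s)).le
      exact mul_nonpos_of_nonneg_of_nonpos hexp h2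
  -- conclusion
  intro t ht
  have hψ0 : ψf 0 = 0 := by simp [hψdef, hFdef]
  have hFle : F t ≤ 0 := by
    have := hanti (left_mem_Icc.mpr hT.le) ht ht.1
    rw [hψ0] at this
    have h2 : Real.exp (-(2*K)*t) * F t ≤ 0 := this
    nlinarith [Real.exp_pos (-(2*K)*t)]
  have hFge : (0:ℝ) ≤ F t :=
    intervalIntegral.integral_nonneg ht.1 (fun τ _ => hpos τ)
  have hFt : F t = 0 := le_antisymm hFle hFge
  have hht0 : h t = 0 := by
    have := hFTC2 t ht
    rw [hFt] at this
    have := hpos t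
    linarith
  have hnorm0 : ‖u t - w t‖ = 0 := by
    have := hnormsq t
    rw [hht0] at this
    nlinarith [norm_nonneg (u t - w t)]
  have : u t - w t = 0 := norm_eq_zero.mp hnorm0
  exact sub_eq_zero.mp this
end
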